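/- Let P be a reduced polyomino in RP(m,n) with area word 0 a_1…a_{m+n}, and let φ(P) be the two car parking function of size m+n whose area word is |a_1|…|a_{m+n}| and whose i-th label is 1 if a_i is barred and 2 if a_i is unbarred. Then bounce(P) = pmaj(φ(P)). -/

import Mathlib

open Finset

attribute [local instance 0] Classical.propDecidable

noncomputable section

namespace DeltaConj

abbrev QT : Type := FractionRing (MvPolynomial (Fin 2) ℚ)
def qv : QT := algebraMap (MvPolynomial (Fin 2) ℚ) QT (MvPolynomial.X 0)
def tv : QT := algebraMap (MvPolynomial (Fin 2) ℚ) QT (MvPolynomial.X 1)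
def qint (n : ℕ) : QT := ∑ i ∈ Finset.range n, qv ^ i
def qfact (n : ℕ) : QT := ∏ i ∈ Finset.range n, qint (i + 1)
def qbinom (n k : ℤ) : QT :=
  if 0 ≤ k ∧ k ≤ n then qfact n.toNat / (qfact k.toNat * qfact (n - k).toNat) else 0

/-! ## Decorated Dyck paths, encoded by their area words.

A Dyck path of size `n` is encoded by its area word `w`, a function `Fin n → Fin (n+1)`
with `w 0 = 0` which increases by at most one at each step.  A decorated Dyck path
carries a set of decorated peaks and a set of decorated rises. -/

/-- `(area word, set of decorated peaks, set of decorated rises)`. -/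
abbrev DDBase (n : ℕ) := (Fin n → Fin (n + 1)) × Finset (Fin n) × Finset (Fin n)

/-- The value of the area word at a (0-indexed) natural index, `0` out of range. -/
def wv (n : ℕ) (w : Fin n → Fin (n + 1)) (i : ℕ) : ℕ :=
  if h : i < n then (w ⟨i, h⟩ : ℕ) else 0

def IsAreaWord (n : ℕ) (w : Fin n → Fin (n + 1)) : Prop :=
  wv n w 0 = 0 ∧ ∀ i : ℕ, i + 1 < n → wv n w (i + 1) ≤ wv n w i + 1

/-- Row `i` (0-indexed) is a rise: its north step is directly preceded by a north step. -/
def IsRise (n : ℕ) (w : Fin n → Fin (n + 1)) (i : ℕ) : Prop :=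
  1 ≤ i ∧ i < n ∧ wv n w (i - 1) < wv n w i

/-- Row `i` (0-indexed) is a peak: its north step is directly followed by an east step. -/
def IsPeak (n : ℕ) (w : Fin n → Fin (n + 1)) (i : ℕ) : Prop :=
  i < n ∧ (i + 1 = n ∨ wv n w (i + 1) ≤ wv n w i)

/-- Membership in `DD(n)^{∘a,∗b}`. -/
def IsDD (n : ℕ) (a b : ℤ) (D : DDBase n) : Prop :=
  IsAreaWord n D.1 ∧ (∀ p ∈ D.2.1, IsPeak n D.1 (p : ℕ)) ∧
    (∀ r ∈ D.2.2, IsRise n D.1 (r : ℕ)) ∧ (D.2.1.card : ℤ) = a ∧ (D.2.2.card : ℤ) = b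

/-- The area of a decorated Dyck path (rows with a decorated rise do not count). -/
def ddArea (n : ℕ) (D : DDBase n) : ℕ :=
  ∑ i ∈ (range n).filter (fun i => ¬ ∃ r ∈ D.2.2, (r : ℕ) = i), wv n D.1 i

/-- The dinv of a decorated Dyck path. -/
def ddDinv (n : ℕ) (D : DDBase n) : ℕ :=
  ((range n ×ˢ range n).filter fun ij =>
      ij.1 < ij.2 ∧ wv n D.1 ij.1 = wv n D.1 ij.2 ∧ ¬ ∃ p ∈ D.2.1, (p : ℕ) = ij.1).card +
  ((range n ×ˢ range n).filter fun ij =>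
      ij.1 < ij.2 ∧ wv n D.1 ij.1 = wv n D.1 ij.2 + 1 ∧ ¬ ∃ p ∈ D.2.1, (p : ℕ) = ij.2).card

/-- The height of the east step of the path going from column `c` to column `c+1`. -/
def ddE (n : ℕ) (w : Fin n → Fin (n + 1)) (c : ℕ) : ℕ :=
  ((range n).filter fun i => i - wv n w i ≤ c).card

/-- The heights at which the bounce path returns to the main diagonal. -/
def ddBeta (n : ℕ) (w : Fin n → Fin (n + 1)) : ℕ → ℕ
  | 0 => 0
  | k + 1 => ddE n w (ddBeta n w k)

/-- The letter of the bounce word in (0-indexed) row `i`. -/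
def ddBval (n : ℕ) (w : Fin n → Fin (n + 1)) (i : ℕ) : ℕ :=
  ((Finset.Icc 1 n).filter fun k => ddBeta n w k ≤ i).card

/-- The bounce of a decorated Dyck path (rows with a decorated peak do not count). -/
def ddBounce (n : ℕ) (D : DDBase n) : ℕ :=
  ∑ i ∈ (range n).filter (fun i => ¬ ∃ p ∈ D.2.1, (p : ℕ) = i), ddBval n D.1 i

/-- The number of zeros of the bounce word. -/
def ddBounceZeros (n : ℕ) (D : DDBase n) : ℕ :=
  ((range n).filter fun i => ddBval n D.1 i = 0).card

/-- The number of zeros of the area word. -/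
def ddAreaZeros (n : ℕ) (D : DDBase n) : ℕ :=
  ((range n).filter fun i => wv n D.1 i = 0).card

/-- The column of the fall corresponding to the rise in row `i`: the first fall
(east step followed by an east step), coming after the given rise, which crosses
horizontally the diagonal which the rise crosses vertically. -/
def ddFallCol (n : ℕ) (w : Fin n → Fin (n + 1)) (i : ℕ) : ℕ :=
  if h : (((range n).filter fun x => x + 1 < n ∧ ddE n w (x + 1) = ddE n w x ∧
        i + 1 ≤ ddE n w x ∧ ddE n w x = x + 1 + wv n w i)).Nonempty then
    (((range n).filter fun x => x + 1 < n ∧ ddE n w (x + 1) = ddE n w x ∧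
        i + 1 ≤ ddE n w x ∧ ddE n w x = x + 1 + wv n w i)).min' h
  else n

/-- Membership in `DDd(n)^{∘a,∗b}`: the rightmost highest peak is not decorated. -/
def IsDDd (n : ℕ) (a b : ℤ) (D : DDBase n) : Prop :=
  IsDD n a b D ∧ ∀ p ∈ D.2.1, ∃ j : ℕ, IsPeak n D.1 j ∧
    (wv n D.1 (p : ℕ) < wv n D.1 j ∨ ((p : ℕ) < j ∧ wv n D.1 (p : ℕ) = wv n D.1 j))

/-- Membership in `DDb(n)^{∘a,∗b}`: the peak in the leftmost column is not decorated. -/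
def IsDDb (n : ℕ) (a b : ℤ) (D : DDBase n) : Prop :=
  IsDD n a b D ∧ ∀ p ∈ D.2.1, wv n D.1 (p : ℕ) ≠ (p : ℕ)

/-- Membership in `DDp(n)^{∘a,∗b}`: the peak in the top row is not decorated. -/
def IsDDp (n : ℕ) (a b : ℤ) (D : DDBase n) : Prop :=
  IsDD n a b D ∧ ∀ p ∈ D.2.1, (p : ℕ) + 1 ≠ n

/-- Number of decorated peaks strictly below height `h`. -/
def ddDel (n : ℕ) (Pk : Finset (Fin n)) (h : ℕ) : ℕ :=
  (Pk.filter fun p => (p : ℕ) < h).card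

/-- Height of the east step of the "leaning stack" path (obtained by deleting the east
step following each decorated peak) going from column `c` to column `c+1`. -/
def ddE' (n : ℕ) (w : Fin n → Fin (n + 1)) (Pk : Finset (Fin n)) (c : ℕ) : ℕ :=
  ((range n).filter fun i => i - wv n w i - ddDel n Pk i ≤ c).card

/-- The heights at which the pbounce path returns to the (shifted) main diagonal. -/
def ddGamma (n : ℕ) (w : Fin n → Fin (n + 1)) (Pk : Finset (Fin n)) : ℕ → ℕ
  | 0 => 0
  | k + 1 => ddE' n w Pk (ddGamma n w Pk k - ddDel n Pk (ddGamma n w Pk k))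

/-- The letter of the pbounce word in (0-indexed) row `i`. -/
def ddPLabel (n : ℕ) (w : Fin n → Fin (n + 1)) (Pk : Finset (Fin n)) (i : ℕ) : ℕ :=
  ((Finset.Icc 1 n).filter fun k => ddGamma n w Pk k ≤ i).card

/-- The pbounce statistic of a decorated Dyck path. -/
def ddPBounce (n : ℕ) (D : DDBase n) : ℕ :=
  ∑ i ∈ range n, ddPLabel n D.1 D.2.1 i

/-- The number of zeros of the pbounce word. -/
def ddPBounceZeros (n : ℕ) (D : DDBase n) : ℕ :=
  ((range n).filter fun i => ddPLabel n D.1 D.2.1 i = 0).card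

/-! q,t-enumerators of the various refined families of decorated Dyck paths. -/

/-- `DDb_{q,t}(n\k)^{∘a,∗b}` (bistatistic (area, bounce)). -/
def DDbE (n : ℕ) (κ a b : ℤ) : QT :=
  ∑ D ∈ univ.filter (fun D : DDBase n => IsDDb n a b D ∧ (ddBounceZeros n D : ℤ) = κ),
    qv ^ ddArea n D * tv ^ ddBounce n D

/-- `DDb_{q,t}(n\k\0)^{∘a,∗b}` (no decorated fall in the first `κ` columns). -/
def DDbE0 (n : ℕ) (κ a b : ℤ) : QT :=
  ∑ D ∈ univ.filter (fun D : DDBase n => IsDDb n a b D ∧ (ddBounceZeros n D : ℤ) = κ ∧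
      ∀ r ∈ D.2.2, κ ≤ (ddFallCol n D.1 (r : ℕ) : ℤ)),
    qv ^ ddArea n D * tv ^ ddBounce n D

/-- `DDd_{q,t}(n\k)^{∘a,∗b}` (bistatistic (dinv, area)). -/
def DDdE (n : ℕ) (κ a b : ℤ) : QT :=
  ∑ D ∈ univ.filter (fun D : DDBase n => IsDDd n a b D ∧ (ddAreaZeros n D : ℤ) = κ),
    qv ^ ddDinv n D * tv ^ ddArea n D

/-- `DDd_{q,t}(n\k\0)^{∘a,∗b}` (no decorated peak starting on the main diagonal). -/
def DDdE0 (n : ℕ) (κ a b : ℤ) : QT :=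
  ∑ D ∈ univ.filter (fun D : DDBase n => IsDDd n a b D ∧ (ddAreaZeros n D : ℤ) = κ ∧
      ∀ p ∈ D.2.1, wv n D.1 (p : ℕ) ≠ 0),
    qv ^ ddDinv n D * tv ^ ddArea n D

/-- `DDp_{q,t}(n\k\i)^{∘a,∗b}` (bistatistic (area, pbounce)). -/
def DDpE (n : ℕ) (κ ι a b : ℤ) : QT :=
  ∑ D ∈ univ.filter (fun D : DDBase n => IsDDp n a b D ∧ (ddPBounceZeros n D : ℤ) = κ ∧
      ((D.2.2.filter fun r => ((r : ℕ) : ℤ) < κ).card : ℤ) = ι),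
    qv ^ ddArea n D * tv ^ ddPBounce n D

/-- `DDp_{q,t}(n\k)^{∘a,∗b}` (bistatistic (area, pbounce)). -/
def DDpKE (n : ℕ) (κ a b : ℤ) : QT :=
  ∑ D ∈ univ.filter (fun D : DDBase n => IsDDp n a b D ∧ (ddPBounceZeros n D : ℤ) = κ),
    qv ^ ddArea n D * tv ^ ddPBounce n D

/-- `DDp_{q,t}(n)^{∘a,∗b}` (bistatistic (area, pbounce)). -/
def DDpFE (n : ℕ) (a b : ℤ) : QT :=
  ∑ D ∈ univ.filter (fun D : DDBase n => IsDDp n a b D),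
    qv ^ ddArea n D * tv ^ ddPBounce n D

/-! ## Parallelogram polyominoes and reduced polyominoes.

A pair of lattice paths from `(0,0)` to `(m,n)` is encoded by the pair of functions
recording, for each of the two paths, the height of its east step in each column. -/

/-- `(red path, green path)`, each path recorded by the heights of its `m` east steps. -/
abbrev PolyBase (m n : ℕ) := (Fin m → Fin (n + 1)) × (Fin m → Fin (n + 1))

/-- Height of the east step of the red path from column `x` to `x+1` (`n` out of range). -/
def rH (m n : ℕ) (P : PolyBase m n) (x : ℕ) : ℕ := if h : x < m then (P.1 ⟨x, h⟩ : ℕ) else n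

/-- Height of the east step of the green path from column `x` to `x+1` (`n` out of range). -/
def gH (m n : ℕ) (P : PolyBase m n) (x : ℕ) : ℕ := if h : x < m then (P.2 ⟨x, h⟩ : ℕ) else n

/-- `P` is a parallelogram polyomino of size `m × n`: both paths are monotone, the red
path starts north and ends east, the green path starts east and ends north, and the red
path stays strictly above the green path except at the two endpoints. -/
def IsPP (m n : ℕ) (P : PolyBase m n) : Prop :=
  (∀ x y : ℕ, x ≤ y → rH m n P x ≤ rH m n P y) ∧
  (∀ x y : ℕ, x ≤ y → gH m n P x ≤ gH m n P y) ∧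
  gH m n P 0 = 0 ∧ rH m n P (m - 1) = n ∧
  (∀ x : ℕ, 1 ≤ x → x ≤ m - 1 → gH m n P x < rH m n P (x - 1))

/-- `P` is a reduced polyomino of size `m × n`: both paths are monotone and the red path
stays weakly above the green path. -/
def IsRP (m n : ℕ) (P : PolyBase m n) : Prop :=
  (∀ x y : ℕ, x ≤ y → rH m n P x ≤ rH m n P y) ∧
  (∀ x y : ℕ, x ≤ y → gH m n P x ≤ gH m n P y) ∧
  (∀ x : ℕ, gH m n P x ≤ rH m n P x)

/-- The area of a (parallelogram or reduced) polyomino: the number of whole squares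
between the two paths. -/
def polyArea (m n : ℕ) (P : PolyBase m n) : ℕ := ∑ x ∈ range m, (rH m n P x - gH m n P x)

/-- The corners `(column, height)` of the bounce path of a parallelogram polyomino. -/
def ppSeq (m n : ℕ) (P : PolyBase m n) : ℕ → ℕ × ℕ
  | 0 => (1, 0)
  | k + 1 =>
      (((range m).filter fun x => gH m n P x < rH m n P ((ppSeq m n P k).1 - 1)).card,
        rH m n P ((ppSeq m n P k).1 - 1))

/-- Value of the letter of the bounce word of a parallelogram polyomino attached to the
north bounce step reaching height `y`. -/
def ppVval (m n : ℕ) (P : PolyBase m n) (y : ℕ) : ℕ :=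
  ((range (m + n + 1)).filter fun k => (ppSeq m n P k).2 < y).card

/-- Value of the letter of the bounce word of a parallelogram polyomino attached to the
east bounce step crossing from column `x` to `x+1`. -/
def ppBval (m n : ℕ) (P : PolyBase m n) (x : ℕ) : ℕ :=
  ((range (m + n + 1)).filter fun k => (ppSeq m n P k).1 ≤ x).card

/-- The bounce of an (undecorated) parallelogram polyomino. -/
def ppBounce (m n : ℕ) (P : PolyBase m n) : ℕ :=
  (∑ y ∈ Finset.Icc 1 n, ppVval m n P y) + ∑ x ∈ range m, ppBval m n P x

/-- The number of letters `1` in the bounce word of a parallelogram polyomino. -/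
def ppOnesB (m n : ℕ) (P : PolyBase m n) : ℕ :=
  ((Finset.Icc 1 n).filter fun y => ppVval m n P y = 1).card

/-- Membership in `PP(m,n)^{∘k}`: a parallelogram polyomino with `k` decorated red peaks
(a red peak in column `x ≥ 1` is an east red step directly preceded by a north red step;
the leftmost red peak, in column `0`, is never decorated). -/
def IsPPpk (m n : ℕ) (k : ℤ) (P : PolyBase m n × Finset (Fin m)) : Prop :=
  IsPP m n P.1 ∧
  (∀ x ∈ P.2, 1 ≤ (x : ℕ) ∧ rH m n P.1 ((x : ℕ) - 1) < rH m n P.1 (x : ℕ)) ∧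
  (P.2.card : ℤ) = k

/-- The bounce of a peak-decorated parallelogram polyomino: letters of horizontal bounce
steps lying in the same column as a decorated red peak are not counted. -/
def ppBounceD (m n : ℕ) (P : PolyBase m n × Finset (Fin m)) : ℕ :=
  (∑ y ∈ Finset.Icc 1 n, ppVval m n P.1 y) +
    ∑ x ∈ (range m).filter (fun x => ¬ ∃ p ∈ P.2, (p : ℕ) = x), ppBval m n P.1 x

/-- The (0-indexed) `i`-th step of the red path is an east step. -/
def polyRedE (m n : ℕ) (P : PolyBase m n) (i : ℕ) : Prop := ∃ x, x < m ∧ i = rH m n P x + x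

/-- The (0-indexed) `i`-th step of the green path is an east step. -/
def polyGreenE (m n : ℕ) (P : PolyBase m n) (i : ℕ) : Prop := ∃ x, x < m ∧ i = gH m n P x + x

/-- The word (`True` = north) of the Dyck path of size `m+n` obtained from a parallelogram
polyomino by interleaving red and green steps, a north step corresponding to a red north
step or a green east step (padded by `True` beyond the end). -/
def ppW (m n : ℕ) (P : PolyBase m n) (k : ℕ) : Prop :=
  if k < 2 * (m + n) then
    (if k % 2 = 0 then ¬ polyRedE m n P (k / 2) else polyGreenE m n P (k / 2))
  else True

/-- Heights along the interleaved Dyck path. -/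
def ppHt (m n : ℕ) (P : PolyBase m n) : ℕ → ℕ
  | 0 => 0
  | k + 1 => if ppW m n P k then ppHt m n P k + 1 else ppHt m n P k - 1

/-- The rank (position in the ordered alphabet `0̄ < 1 < 1̄ < 2 < 2̄ < ⋯`) of the
(0-indexed) `i`-th letter of the area word of a parallelogram polyomino. -/
def ppRank (m n : ℕ) (P : PolyBase m n) (i : ℕ) : ℕ := ppHt m n P (Nat.nth (ppW m n P) i)

/-- The numerical value (ignoring the bar) of the `i`-th letter of the area word. -/
def ppVal (m n : ℕ) (P : PolyBase m n) (i : ℕ) : ℕ := (ppRank m n P i + 1) / 2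

/-- The dinv of a parallelogram polyomino: the number of pairs `i < j` such that the
`j`-th letter of the area word is the successor of the `i`-th letter. -/
def ppDinv (m n : ℕ) (P : PolyBase m n) : ℕ :=
  ((range (m + n) ×ˢ range (m + n)).filter fun ij =>
    ij.1 < ij.2 ∧ ppRank m n P ij.2 = ppRank m n P ij.1 + 1).card

/-- The number of letters `1` in the area word of a parallelogram polyomino. -/
def ppOnesA (m n : ℕ) (P : PolyBase m n) : ℕ :=
  ((range (m + n)).filter fun i => ppRank m n P i = 1).card

/-- Membership in `PP(m,n)^{∗k}`: a parallelogram polyomino with `k` decorated rises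
(the initial `0̄1` rise is never decorated). -/
def IsPPrise (m n : ℕ) (k : ℤ) (P : PolyBase m n × Finset (Fin (m + n))) : Prop :=
  IsPP m n P.1 ∧
  (∀ i ∈ P.2, 1 ≤ (i : ℕ) ∧ (i : ℕ) + 1 < m + n ∧
    ppVal m n P.1 (i : ℕ) < ppVal m n P.1 ((i : ℕ) + 1)) ∧
  (P.2.card : ℤ) = k

/-- The area of a rise-decorated parallelogram polyomino. -/
def ppAreaD (m n : ℕ) (P : PolyBase m n × Finset (Fin (m + n))) : ℕ :=
  ∑ i ∈ (range (m + n)).filter (fun i => ¬ ∃ s ∈ P.2, (s : ℕ) = i), ppVal m n P.1 i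

/-- `PP_{q,t}(m\r, n)^{∗k}`, the (dinv, area) q,t-enumerator. -/
def PPrE (m n : ℕ) (ρ k : ℤ) : QT :=
  ∑ P ∈ univ.filter (fun P : PolyBase m n × Finset (Fin (m + n)) =>
      IsPPrise m n k P ∧ (ppOnesA m n P.1 : ℤ) = ρ),
    qv ^ ppDinv m n P.1 * tv ^ ppAreaD m n P

/-- `PP_{q,t}(m, n\s)^{∘k}`, the (area, bounce) q,t-enumerator. -/
def PPpE (m n : ℕ) (σ k : ℤ) : QT :=
  ∑ P ∈ univ.filter (fun P : PolyBase m n × Finset (Fin m) =>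
      IsPPpk m n k P ∧ (ppOnesB m n P.1 : ℤ) = σ),
    qv ^ polyArea m n P.1 * tv ^ ppBounceD m n P

/-! ### Reduced polyominoes -/

/-- The corners `(column, height)` of the bounce path of a reduced polyomino. -/
def rpSeq (m n : ℕ) (P : PolyBase m n) : ℕ → ℕ × ℕ
  | 0 => (0, 0)
  | k + 1 =>
      ((((range m).filter fun x => gH m n P x ≤ (rpSeq m n P k).2)).card,
        rH m n P ((((range m).filter fun x => gH m n P x ≤ (rpSeq m n P k).2)).card))

/-- Value of the letter of the bounce word of a reduced polyomino attached to the east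
bounce step crossing from column `x` to `x+1`. -/
def rpHval (m n : ℕ) (P : PolyBase m n) (x : ℕ) : ℕ :=
  ((Finset.Icc 1 (m + n + 1)).filter fun k => (rpSeq m n P k).1 ≤ x).card

/-- Value of the letter of the bounce word of a reduced polyomino attached to the north
bounce step reaching height `y`. -/
def rpVval (m n : ℕ) (P : PolyBase m n) (y : ℕ) : ℕ :=
  ((Finset.Icc 1 (m + n + 1)).filter fun k => (rpSeq m n P k).2 < y).card

/-- The bounce of an (undecorated) reduced polyomino. -/
def rpBounce (m n : ℕ) (P : PolyBase m n) : ℕ :=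
  (∑ x ∈ range m, rpHval m n P x) + ∑ y ∈ Finset.Icc 1 n, rpVval m n P y

/-- The number of letters `0` in the bounce word of a reduced polyomino. -/
def rpBounceZeros (m n : ℕ) (P : PolyBase m n) : ℕ :=
  ((range m).filter fun x => rpHval m n P x = 0).card

/-- The green east step in column `x` is a green peak (directly preceded by a green
north step). -/
def IsGreenPeak (m n : ℕ) (P : PolyBase m n) (x : ℕ) : Prop :=
  x < m ∧ (if x = 0 then 1 ≤ gH m n P 0 else gH m n P (x - 1) < gH m n P x)

/-- Membership in `RP(m,n)^{∘k}`: a reduced polyomino with `k` decorated green peaks. -/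
def IsRPpk (m n : ℕ) (k : ℤ) (P : PolyBase m n × Finset (Fin m)) : Prop :=
  IsRP m n P.1 ∧ (∀ x ∈ P.2, IsGreenPeak m n P.1 (x : ℕ)) ∧ (P.2.card : ℤ) = k

/-- The bounce of a peak-decorated reduced polyomino. -/
def rpBounceD (m n : ℕ) (P : PolyBase m n × Finset (Fin m)) : ℕ :=
  (∑ x ∈ (range m).filter (fun x => ¬ ∃ p ∈ P.2, (p : ℕ) = x), rpHval m n P.1 x) +
    ∑ y ∈ Finset.Icc 1 n, rpVval m n P.1 y

/-- The word (`True` = north) of the Dyck path of size `m+n+1` obtained from a reduced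
polyomino by prepending a north step to the red path, appending an east step to the
green path and interleaving (padded by `True` beyond the end). -/
def rpW (m n : ℕ) (P : PolyBase m n) (k : ℕ) : Prop :=
  if k = 0 then True
  else if k ≤ 2 * (m + n) then
    (if k % 2 = 1 then ¬ polyRedE m n P ((k - 1) / 2) else polyGreenE m n P (k / 2 - 1))
  else if k = 2 * (m + n) + 1 then False
  else True

/-- Heights along the interleaved Dyck path of a reduced polyomino. -/
def rpHt (m n : ℕ) (P : PolyBase m n) : ℕ → ℕ
  | 0 => 0
  | k + 1 => if rpW m n P k then rpHt m n P k + 1 else rpHt m n P k - 1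

/-- The rank (position in the ordered alphabet `0 < 0̄ < 1 < 1̄ < ⋯`) of the
(0-indexed) `i`-th letter of the area word of a reduced polyomino. -/
def rpRank (m n : ℕ) (P : PolyBase m n) (i : ℕ) : ℕ := rpHt m n P (Nat.nth (rpW m n P) i)

/-- The numerical value (ignoring the bar) of the `i`-th letter of the area word. -/
def rpVal (m n : ℕ) (P : PolyBase m n) (i : ℕ) : ℕ := rpRank m n P i / 2

/-- The dinv of a reduced polyomino: the number of pairs `i < j` such that the `i`-th
letter of the area word is the successor of the `j`-th letter. -/
def rpDinv (m n : ℕ) (P : PolyBase m n) : ℕ :=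
  ((range (m + n + 1) ×ˢ range (m + n + 1)).filter fun ij =>
    ij.1 < ij.2 ∧ rpRank m n P ij.1 = rpRank m n P ij.2 + 1).card

/-- The number of letters `0` in the area word of a reduced polyomino. -/
def rpAreaZeros (m n : ℕ) (P : PolyBase m n) : ℕ :=
  ((range (m + n + 1)).filter fun i => rpRank m n P i = 0).card

/-- The (0-indexed) index `i` of the area word of a reduced polyomino is a rise. -/
def IsRPRiseAt (m n : ℕ) (P : PolyBase m n) (i : ℕ) : Prop :=
  1 ≤ i ∧ i < m + n + 1 ∧ rpVal m n P (i - 1) < rpVal m n P i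

/-- Membership in `RP(m,n)^{∗k}`: a reduced polyomino with `k` decorated rises. -/
def IsRPrise (m n : ℕ) (k : ℤ) (P : PolyBase m n × Finset (Fin (m + n + 1))) : Prop :=
  IsRP m n P.1 ∧ (∀ i ∈ P.2, IsRPRiseAt m n P.1 (i : ℕ)) ∧ (P.2.card : ℤ) = k

/-- The area of a rise-decorated reduced polyomino. -/
def rpAreaD (m n : ℕ) (P : PolyBase m n × Finset (Fin (m + n + 1))) : ℕ :=
  ∑ i ∈ (range (m + n + 1)).filter (fun i => ¬ ∃ s ∈ P.2, (s : ℕ) = i), rpVal m n P.1 i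

/-- `RP_{q,t}(m\r, n)^{∗k}`, the (dinv, area) q,t-enumerator. -/
def RPrE (m n : ℕ) (ρ k : ℤ) : QT :=
  ∑ P ∈ univ.filter (fun P : PolyBase m n × Finset (Fin (m + n + 1)) =>
      IsRPrise m n k P ∧ (rpAreaZeros m n P.1 : ℤ) = ρ),
    qv ^ rpDinv m n P.1 * tv ^ rpAreaD m n P

/-- `RP_{q,t}(m\r, n)^{∘k}`, the (area, bounce) q,t-enumerator. -/
def RPpE (m n : ℕ) (ρ k : ℤ) : QT :=
  ∑ P ∈ univ.filter (fun P : PolyBase m n × Finset (Fin m) =>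
      IsRPpk m n k P ∧ (rpBounceZeros m n P.1 : ℤ) = ρ - 1),
    qv ^ polyArea m n P.1 * tv ^ rpBounceD m n P

/-! ## Labelled Dyck paths: the pmaj statistic, two car parking functions,
partially labelled Dyck paths, and labelled parallelogram polyominoes. -/

/-- The multiset of labels in column `c` of a labelled Dyck path with area word `w`
and labels `l` (the row `i` lies in column `i - w i`). -/
def ldColLab (N : ℕ) (w l : ℕ → ℕ) (c : ℕ) : Multiset ℕ :=
  (((range N).filter fun i => i - w i = c)).val.map l

/-- The pair `(Cᵢ, pᵢ)` of the parking algorithm computing the parking word of a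
labelled Dyck path: `ldPAux N w l k = (C_(k+1), p_(k+1))`. -/
def ldPAux (N : ℕ) (w l : ℕ → ℕ) : ℕ → Multiset ℕ × ℕ
  | 0 => (ldColLab N w l 0, (ldColLab N w l 0).sup)
  | k + 1 =>
      let prev := ldPAux N w l k
      let C := prev.1.erase prev.2 + ldColLab N w l (k + 1)
      let F := C.filter fun x => x ≤ prev.2
      (C, if F = 0 then C.sup else F.sup)

/-- The (0-indexed) `i`-th letter of the parking word of a labelled Dyck path. -/
def ldPword (N : ℕ) (w l : ℕ → ℕ) (i : ℕ) : ℕ := (ldPAux N w l i).2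

/-- The pmaj statistic of a labelled Dyck path with area word `w` and labels `l`:
the major index of the reversed parking word. -/
def ldPmaj (N : ℕ) (w l : ℕ → ℕ) : ℕ :=
  ∑ i ∈ range (N - 1), if ldPword N w l i < ldPword N w l (i + 1) then N - 1 - i else 0

/-! ### Two car parking functions -/

/-- `(area word, labels (all equal to 1 or 2), decorated rises)`. -/
abbrev PF2Base (m n : ℕ) :=
  (Fin (m + n) → Fin (m + n + 1)) × (Fin (m + n) → Fin 3) × Finset (Fin (m + n))

/-- The label of row `i`, as a natural number (`0` out of range). -/
def lv3 (m n : ℕ) (l : Fin (m + n) → Fin 3) (i : ℕ) : ℕ :=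
  if h : i < m + n then (l ⟨i, h⟩ : ℕ) else 0

/-- Membership in `PF²(m\r, n)^{∗k}`: a labelled Dyck path of size `m+n` with `n` labels
equal to `1` and `m` labels equal to `2`, labels strictly increasing in columns, `r-1`
labels `2` in rows starting on the main diagonal, and `k` decorated rises. -/
def IsPF2 (m n : ℕ) (ρ k : ℤ) (D : PF2Base m n) : Prop :=
  IsAreaWord (m + n) D.1 ∧
  (∀ i : ℕ, i < m + n → lv3 m n D.2.1 i = 1 ∨ lv3 m n D.2.1 i = 2) ∧
  ((range (m + n)).filter fun i => lv3 m n D.2.1 i = 1).card = n ∧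
  ((range (m + n)).filter fun i => lv3 m n D.2.1 i = 2).card = m ∧
  (∀ i : ℕ, IsRise (m + n) D.1 i → lv3 m n D.2.1 (i - 1) < lv3 m n D.2.1 i) ∧
  (∀ r ∈ D.2.2, IsRise (m + n) D.1 (r : ℕ)) ∧ (D.2.2.card : ℤ) = k ∧
  (((range (m + n)).filter fun i =>
      wv (m + n) D.1 i = 0 ∧ lv3 m n D.2.1 i = 2).card : ℤ) = ρ - 1

/-- The dinv of a labelled Dyck path with labels in `{1,2}`. -/
def pf2Dinv (m n : ℕ) (D : PF2Base m n) : ℕ :=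
  ((range (m + n) ×ˢ range (m + n)).filter fun ij =>
      ij.1 < ij.2 ∧ wv (m + n) D.1 ij.1 = wv (m + n) D.1 ij.2 ∧
        lv3 m n D.2.1 ij.1 < lv3 m n D.2.1 ij.2).card +
  ((range (m + n) ×ˢ range (m + n)).filter fun ij =>
      ij.1 < ij.2 ∧ wv (m + n) D.1 ij.1 = wv (m + n) D.1 ij.2 + 1 ∧
        lv3 m n D.2.1 ij.2 < lv3 m n D.2.1 ij.1).card

/-- The area of a rise-decorated two car parking function. -/
def pf2Area (m n : ℕ) (D : PF2Base m n) : ℕ :=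
  ∑ i ∈ (range (m + n)).filter (fun i => ¬ ∃ s ∈ D.2.2, (s : ℕ) = i), wv (m + n) D.1 i

/-! ### Partially labelled Dyck paths -/

/-- `(area word, labels (nonnegative integers), decorated rises)`. -/
abbrev PLDBase (N : ℕ) := (Fin N → Fin (N + 1)) × (Fin N → ℕ) × Finset (Fin N)

/-- The label of row `i`, as a natural number (`0` out of range). -/
def lvN (N : ℕ) (l : Fin N → ℕ) (i : ℕ) : ℕ := if h : i < N then l ⟨i, h⟩ else 0

/-- Membership in `PLD(mz, nz)^{∗k}`: a partially labelled Dyck path of size `mz + nz`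
with `mz` labels equal to `0` and `nz` nonzero labels, labels strictly increasing in
columns, no `0` label in the first column, and `k` decorated rises. -/
def IsPLD (mz nz k : ℕ) (D : PLDBase (mz + nz)) : Prop :=
  IsAreaWord (mz + nz) D.1 ∧
  ((range (mz + nz)).filter fun i => lvN (mz + nz) D.2.1 i = 0).card = mz ∧
  ((range (mz + nz)).filter fun i => lvN (mz + nz) D.2.1 i ≠ 0).card = nz ∧
  (∀ i : ℕ, IsRise (mz + nz) D.1 i → lvN (mz + nz) D.2.1 (i - 1) < lvN (mz + nz) D.2.1 i) ∧
  (∀ i : ℕ, i < mz + nz → wv (mz + nz) D.1 i = i → lvN (mz + nz) D.2.1 i ≠ 0) ∧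
  (∀ r ∈ D.2.2, IsRise (mz + nz) D.1 (r : ℕ)) ∧ D.2.2.card = k

/-- The area of a rise-decorated partially labelled Dyck path. -/
def pldArea (mz nz : ℕ) (D : PLDBase (mz + nz)) : ℕ :=
  ∑ i ∈ (range (mz + nz)).filter (fun i => ¬ ∃ s ∈ D.2.2, (s : ℕ) = i), wv (mz + nz) D.1 i

/-- The pmaj of a partially labelled Dyck path. -/
def pldPmaj (mz nz : ℕ) (D : PLDBase (mz + nz)) : ℕ :=
  ldPmaj (mz + nz) (wv (mz + nz) D.1) (lvN (mz + nz) D.2.1)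

/-! ### Labelled parallelogram polyominoes -/

/-- A parallelogram polyomino together with labels on the `n` north steps of the red path. -/
abbrev LPPBase (m n : ℕ) := PolyBase m n × (Fin n → ℕ)

/-- The column of the (0-indexed) `y`-th north step of the red path. -/
def colOfNorth (m n : ℕ) (P : PolyBase m n) (y : ℕ) : ℕ :=
  ((range m).filter fun x => rH m n P x ≤ y).card

/-- Membership in `LPP(m,n)`: a labelled parallelogram polyomino (positive labels,
strictly increasing within each column). -/
def IsLPP (m n : ℕ) (L : LPPBase m n) : Prop :=
  IsPP m n L.1 ∧ (∀ y : Fin n, 1 ≤ L.2 y) ∧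
  (∀ y : ℕ, y + 1 < n → colOfNorth m n L.1 y = colOfNorth m n L.1 (y + 1) →
    lvN n L.2 y < lvN n L.2 (y + 1))

/-- The multiset of labels in column `c` of a labelled parallelogram polyomino. -/
def lppColLab (m n : ℕ) (L : LPPBase m n) (c : ℕ) : Multiset ℕ :=
  (((range n).filter fun y => colOfNorth m n L.1 y = c)).val.map (lvN n L.2)

/-- The pair `(Cᵢ, pᵢ)` of the parking algorithm computing the parking word of a
labelled parallelogram polyomino: `lppAux m n L j = (C_(j+1), p_(j+1))`. -/
def lppAux (m n : ℕ) (L : LPPBase m n) : ℕ → Multiset ℕ × ℕ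
  | 0 => (lppColLab m n L 0, (lppColLab m n L 0).sup)
  | j + 1 =>
      let prev := lppAux m n L j
      let C0 := prev.1.erase prev.2
      let C := if polyGreenE m n L.1 (j + 1)
        then C0 + (0 ::ₘ lppColLab m n L (((range m).filter fun x => gH m n L.1 x + x < j + 1).card))
        else C0
      let F := C.filter fun x => x ≤ prev.2
      (C, if F = 0 then C.sup else F.sup)

/-- The (0-indexed) `j`-th letter of the parking word of a labelled parallelogram
polyomino. -/
def lppPword (m n : ℕ) (L : LPPBase m n) (j : ℕ) : ℕ := (lppAux m n L j).2

/-- The pmaj of a labelled parallelogram polyomino: the major index of the reversed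
parking word, plus `m + n - 1`. -/
def lppPmaj (m n : ℕ) (L : LPPBase m n) : ℕ :=
  (∑ j ∈ range (m + n - 2),
      if lppPword m n L j < lppPword m n L (j + 1) then m + n - 2 - j else 0) + (m + n - 1)

/-- The area of a labelled parallelogram polyomino. -/
def lppArea (m n : ℕ) (L : LPPBase m n) : ℕ := polyArea m n L.1


namespace St16

/-- Cardinality characterization for downward closed subsets of `range m`. -/
lemma lower_card_char {m : ℕ} (p : ℕ → Prop) [DecidablePred p]
    (hdc : ∀ x y, x ≤ y → y < m → p y → p x) :
    ∀ x, x < m → (x < ((range m).filter fun z => p z).card ↔ p x) := by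
  intro x hx
  set s := (range m).filter fun z => p z with hs
  constructor
  · intro hcard
    by_contra hpx
    have hsub : s ⊆ range x := by
      intro z hz
      rw [hs, mem_filter, mem_range] at hz
      rw [mem_range]
      by_contra hzx
      exact hpx (hdc x z (le_of_not_gt hzx) hz.1 hz.2)
    have := card_le_card hsub
    simp only [card_range] at this
    omega
  · intro hpx
    have hsub : range (x + 1) ⊆ s := by
      intro z hz
      rw [mem_range] at hz
      rw [hs, mem_filter, mem_range]
      exact ⟨by omega, hdc z x (by omega) hx hpx⟩
    have := card_le_card hsub
    simp only [card_range] at this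
    omega

variable (m n : ℕ) (P : PolyBase m n)

/-- Number of red east steps among interleaved-path step indices `< t`. -/
def REc (t : ℕ) : ℕ := ((range m).filter fun x => rH m n P x + x < t).card
/-- Number of green east steps among step indices `< t`. -/
def GEc (t : ℕ) : ℕ := ((range m).filter fun x => gH m n P x + x < t).card
/-- Number of green east steps at height `≤ t`. -/
def CBc (t : ℕ) : ℕ := ((range m).filter fun x => gH m n P x ≤ t).card

variable {m n P}

lemma rH_le (x : ℕ) : rH m n P x ≤ n := by
  unfold rH; split
  · exact Nat.lt_succ_iff.1 (Fin.is_lt _)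
  · exact le_refl n

lemma gH_le (x : ℕ) : gH m n P x ≤ n := by
  unfold gH; split
  · exact Nat.lt_succ_iff.1 (Fin.is_lt _)
  · exact le_refl n

lemma rH_mono (hP : IsRP m n P) : ∀ {x y : ℕ}, x ≤ y → rH m n P x ≤ rH m n P y :=
  fun {x y} h => hP.1 x y h
lemma gH_mono (hP : IsRP m n P) : ∀ {x y : ℕ}, x ≤ y → gH m n P x ≤ gH m n P y :=
  fun {x y} h => hP.2.1 x y h
lemma gH_le_rH (hP : IsRP m n P) (x : ℕ) : gH m n P x ≤ rH m n P x := hP.2.2 x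

lemma char_REc (hP : IsRP m n P) {x t : ℕ} (hx : x < m) :
    x < REc m n P t ↔ rH m n P x + x < t := by
  unfold REc
  refine lower_card_char (fun z => rH m n P z + z < t) (fun a b hab hbm hb => ?_) x hx
  have := rH_mono hP hab; omega

lemma char_GEc (hP : IsRP m n P) {x t : ℕ} (hx : x < m) :
    x < GEc m n P t ↔ gH m n P x + x < t := by
  unfold GEc
  refine lower_card_char (fun z => gH m n P z + z < t) (fun a b hab hbm hb => ?_) x hx
  have := gH_mono hP hab; omega

lemma char_CBc (hP : IsRP m n P) {x t : ℕ} (hx : x < m) :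
    x < CBc m n P t ↔ gH m n P x ≤ t := by
  unfold CBc
  refine lower_card_char (fun z => gH m n P z ≤ t) (fun a b hab hbm hb => ?_) x hx
  have := gH_mono hP hab; omega

lemma REc_le_m (t : ℕ) : REc m n P t ≤ m :=
  le_trans (card_filter_le _ _) (le_of_eq (card_range m))

lemma GEc_le_m (t : ℕ) : GEc m n P t ≤ m :=
  le_trans (card_filter_le _ _) (le_of_eq (card_range m))

lemma CBc_le_m (t : ℕ) : CBc m n P t ≤ m :=
  le_trans (card_filter_le _ _) (le_of_eq (card_range m))

lemma REc_zero : REc m n P 0 = 0 := by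
  unfold REc
  rw [filter_false_of_mem, card_empty]
  intro x _; omega

lemma GEc_zero : GEc m n P 0 = 0 := by
  unfold GEc
  rw [filter_false_of_mem, card_empty]
  intro x _; omega

lemma CBc_mono {s t : ℕ} (h : s ≤ t) : CBc m n P s ≤ CBc m n P t := by
  apply card_le_card
  intro x hx; rw [mem_filter] at hx ⊢; exact ⟨hx.1, le_trans hx.2 h⟩

/-- step-count increment lemmas -/
lemma REc_succ (hP : IsRP m n P) (t : ℕ) :
    REc m n P (t + 1) = REc m n P t + (if polyRedE m n P t then 1 else 0) := by
  classical
  have hsplit : ((range m).filter fun x => rH m n P x + x < t + 1) =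
      ((range m).filter fun x => rH m n P x + x < t) ∪
        ((range m).filter fun x => rH m n P x + x = t) := by
    rw [← filter_or]; apply filter_congr; intro x _; constructor <;> intro h <;> omega
  have hdisj : Disjoint ((range m).filter fun x => rH m n P x + x < t)
      ((range m).filter fun x => rH m n P x + x = t) := by
    rw [disjoint_left]; intro a ha hb
    rw [mem_filter] at ha hb; omega
  rw [REc, REc, hsplit, card_union_of_disjoint hdisj]
  congr 1
  by_cases h : polyRedE m n P t
  · obtain ⟨x, hxm, hxe⟩ := h
    rw [if_pos ⟨x, hxm, hxe⟩]
    have : ((range m).filter fun z => rH m n P z + z = t) = {x} := by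
      apply Finset.eq_singleton_iff_unique_mem.2
      refine ⟨by rw [mem_filter, mem_range]; exact ⟨hxm, hxe.symm⟩, ?_⟩
      intro y hy
      rw [mem_filter, mem_range] at hy
      by_contra hne
      rcases lt_or_gt_of_ne hne with hlt | hgt
      · have h1 : rH m n P y ≤ rH m n P x := hP.1 y x (le_of_lt hlt)
        omega
      · have h1 : rH m n P x ≤ rH m n P y := hP.1 x y (le_of_lt hgt)
        omega
    rw [this, card_singleton]
  · rw [if_neg h]
    rw [filter_false_of_mem, card_empty]
    intro x hx hxe
    exact h ⟨x, mem_range.1 hx, hxe.symm⟩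

lemma GEc_succ (hP : IsRP m n P) (t : ℕ) :
    GEc m n P (t + 1) = GEc m n P t + (if polyGreenE m n P t then 1 else 0) := by
  classical
  have hsplit : ((range m).filter fun x => gH m n P x + x < t + 1) =
      ((range m).filter fun x => gH m n P x + x < t) ∪
        ((range m).filter fun x => gH m n P x + x = t) := by
    rw [← filter_or]; apply filter_congr; intro x _; constructor <;> intro h <;> omega
  have hdisj : Disjoint ((range m).filter fun x => gH m n P x + x < t)
      ((range m).filter fun x => gH m n P x + x = t) := by
    rw [disjoint_left]; intro a ha hb
    rw [mem_filter] at ha hb; omega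
  rw [GEc, GEc, hsplit, card_union_of_disjoint hdisj]
  congr 1
  by_cases h : polyGreenE m n P t
  · obtain ⟨x, hxm, hxe⟩ := h
    rw [if_pos ⟨x, hxm, hxe⟩]
    have : ((range m).filter fun z => gH m n P z + z = t) = {x} := by
      apply Finset.eq_singleton_iff_unique_mem.2
      refine ⟨by rw [mem_filter, mem_range]; exact ⟨hxm, hxe.symm⟩, ?_⟩
      intro y hy
      rw [mem_filter, mem_range] at hy
      by_contra hne
      rcases lt_or_gt_of_ne hne with hlt | hgt
      · have h1 : gH m n P y ≤ gH m n P x := hP.2.1 y x (le_of_lt hlt)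
        omega
      · have h1 : gH m n P x ≤ gH m n P y := hP.2.1 x y (le_of_lt hgt)
        omega
    rw [this, card_singleton]
  · rw [if_neg h]
    rw [filter_false_of_mem, card_empty]
    intro x hx hxe
    exact h ⟨x, mem_range.1 hx, hxe.symm⟩

lemma REc_le_GEc (hP : IsRP m n P) (t : ℕ) : REc m n P t ≤ GEc m n P t := by
  apply card_le_card
  intro x hx
  rw [mem_filter] at hx ⊢
  have := hP.2.2 x
  exact ⟨hx.1, by omega⟩

lemma REc_full (t : ℕ) (ht : m + n ≤ t) : REc m n P t = m := by
  unfold REc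
  rw [filter_true_of_mem, card_range]
  intro x hx
  rw [mem_range] at hx
  have := rH_le (P := P) x
  omega

lemma GEc_full (hP : IsRP m n P) (t : ℕ) (ht : m + n ≤ t) : GEc m n P t = m := by
  have h1 := REc_le_GEc hP t
  have h2 := GEc_le_m (P := P) (t := t)
  rw [REc_full t ht] at h1
  omega


/-! ### The interleaved Dyck word -/

variable (m n P) in
/-- Number of north steps of the interleaved Dyck path among positions `< k`. -/
noncomputable def NT (k : ℕ) : ℕ := Nat.count (rpW m n P) k

lemma rpW_zero : rpW m n P 0 := by simp [rpW]

lemma rpW_odd {c : ℕ} (hc : c < m + n) :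
    rpW m n P (2 * c + 1) ↔ ¬ polyRedE m n P c := by
  have h1 : (2 * c + 1 - 1) / 2 = c := by omega
  unfold rpW
  rw [if_neg (by omega), if_pos (by omega), if_pos (by omega), h1]

lemma rpW_even {c : ℕ} (hc : c < m + n) :
    rpW m n P (2 * c + 2) ↔ polyGreenE m n P c := by
  have h1 : (2 * c + 2) / 2 - 1 = c := by omega
  unfold rpW
  rw [if_neg (by omega), if_pos (by omega), if_neg (by omega), h1]

lemma NT_zero : NT m n P 0 = 0 := by unfold NT; exact Nat.count_zero _
lemma NT_succ (k : ℕ) : NT m n P (k + 1) = NT m n P k + if rpW m n P k then 1 else 0 := by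
  unfold NT; exact Nat.count_succ _ _

lemma NT_mono {s t : ℕ} (h : s ≤ t) : NT m n P s ≤ NT m n P t := by
  unfold NT; exact Nat.count_monotone _ h

lemma NT_one : NT m n P 1 = 1 := by
  rw [NT_succ, NT_zero, if_pos rpW_zero]

lemma NT_pos {k : ℕ} (hk : 1 ≤ k) : 1 ≤ NT m n P k :=
  le_trans (le_of_eq NT_one.symm) (NT_mono hk)

lemma NT_formula (hP : IsRP m n P) : ∀ c : ℕ,
    (c ≤ m + n → NT m n P (2 * c + 1) + REc m n P c = 1 + c + GEc m n P c) ∧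
    (c < m + n → NT m n P (2 * c + 2) + REc m n P (c + 1) = 2 + c + GEc m n P c) := by
  intro c
  induction c with
  | zero =>
    constructor
    · intro _
      simp [NT_one, REc_zero, GEc_zero]
    · intro h0
      have h1 : NT m n P 2 = NT m n P 1 + if rpW m n P 1 then 1 else 0 := NT_succ 1
      have h2 : rpW m n P (2 * 0 + 1) ↔ ¬ polyRedE m n P 0 := rpW_odd h0
      norm_num at h2
      have h3 := REc_succ hP 0
      rw [REc_zero] at h3
      rw [NT_one] at h1
      rw [h1, h3, GEc_zero]
      by_cases hr : polyRedE m n P 0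
      · rw [if_neg (by rw [h2]; exact not_not_intro hr), if_pos hr]
      · rw [if_pos (h2.2 hr), if_neg hr]
  | succ c ih =>
    have hodd : c + 1 ≤ m + n → NT m n P (2 * (c + 1) + 1) + REc m n P (c + 1) =
        1 + (c + 1) + GEc m n P (c + 1) := by
      intro hc
      have hc' : c < m + n := by omega
      have h1 : 2 * (c + 1) + 1 = (2 * c + 2) + 1 := by ring
      have h2 : NT m n P ((2 * c + 2) + 1) =
          NT m n P (2 * c + 2) + if rpW m n P (2 * c + 2) then 1 else 0 := NT_succ _
      have h3 := (rpW_even hc' : rpW m n P (2*c+2) ↔ polyGreenE m n P c)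
      have h4 := GEc_succ hP c
      have h5 := ih.2 hc'
      rw [h1, h2, h4]
      by_cases hg : polyGreenE m n P c
      · rw [if_pos (h3.2 hg), if_pos hg]; omega
      · rw [if_neg (by rw [h3]; exact hg), if_neg hg]; omega
    refine ⟨hodd, ?_⟩
    intro hc
    have h1 : 2 * (c + 1) + 2 = (2 * (c + 1) + 1) + 1 := by ring
    have h2 : NT m n P ((2 * (c+1) + 1) + 1) =
        NT m n P (2 * (c+1) + 1) + if rpW m n P (2 * (c+1) + 1) then 1 else 0 := NT_succ _
    have h3 := (rpW_odd hc : rpW m n P (2*(c+1)+1) ↔ ¬ polyRedE m n P (c+1))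
    have h4 := REc_succ hP (c + 1)
    have h5 := hodd (by omega)
    rw [h1, h2, h4]
    by_cases hr : polyRedE m n P (c + 1)
    · rw [if_neg (by rw [h3]; exact not_not_intro hr), if_pos hr]; omega
    · rw [if_pos (h3.2 hr), if_neg hr]; omega

lemma NT_odd_formula (hP : IsRP m n P) {c : ℕ} (hc : c ≤ m + n) :
    NT m n P (2 * c + 1) + REc m n P c = 1 + c + GEc m n P c := (NT_formula hP c).1 hc

lemma NT_even_formula (hP : IsRP m n P) {c : ℕ} (hc : c < m + n) :
    NT m n P (2 * c + 2) + REc m n P (c + 1) = 2 + c + GEc m n P c := (NT_formula hP c).2 hc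

lemma NT_top (hP : IsRP m n P) : NT m n P (2 * (m + n) + 1) = m + n + 1 := by
  have h1 := NT_odd_formula hP (le_refl (m + n))
  rw [REc_full _ (le_refl _), GEc_full hP _ (le_refl _)] at h1
  omega

lemma two_NT_odd_ge (hP : IsRP m n P) {c : ℕ} (hc : c ≤ m + n) :
    2 * c + 2 ≤ 2 * NT m n P (2 * c + 1) := by
  have h1 := NT_odd_formula hP hc
  have h2 := REc_le_GEc hP c
  omega

lemma two_NT_even_ge (hP : IsRP m n P) {c : ℕ} (hc : c < m + n) :
    2 * c + 2 ≤ 2 * NT m n P (2 * c + 2) := by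
  have h1 := NT_even_formula hP hc
  have h2 := REc_le_GEc hP c
  have h3 := REc_succ hP c
  have h4 : (if polyRedE m n P c then 1 else 0) ≤ 1 := by split <;> omega
  omega

lemma two_NT_even_gt (hP : IsRP m n P) {c : ℕ} (hc : c < m + n)
    (hng : ¬ polyGreenE m n P c) : 2 * c + 3 ≤ 2 * NT m n P (2 * c + 2) := by
  have h1 := NT_even_formula hP hc
  have h2 := REc_le_GEc hP c
  have h3 := REc_succ hP c
  by_contra hlt
  -- then REc (c+1) = GEc c + 1, so RedE c holds and REc c = GEc c
  have h5 := two_NT_even_ge hP hc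
  have hre : polyRedE m n P c ∧ REc m n P c = GEc m n P c := by
    by_cases hr : polyRedE m n P c
    · rw [if_pos hr] at h3
      exact ⟨hr, by omega⟩
    · rw [if_neg hr] at h3
      omega
  obtain ⟨⟨x₀, hx₀m, hx₀⟩, hcard⟩ := hre
  have hsub : ((range m).filter fun x => rH m n P x + x < c) ⊆
      ((range m).filter fun x => gH m n P x + x < c) := by
    intro x hx
    rw [mem_filter] at hx ⊢
    have := hP.2.2 x
    exact ⟨hx.1, by omega⟩
  have hcard' : ((range m).filter fun x => gH m n P x + x < c).card ≤
      ((range m).filter fun x => rH m n P x + x < c).card := by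
    have := hcard; unfold REc GEc at this; omega
  have hseteq := Finset.eq_of_subset_of_card_le hsub hcard'
  have hx₀nr : x₀ ∉ ((range m).filter fun x => rH m n P x + x < c) := by
    rw [mem_filter]; push_neg; intro _; omega
  rw [hseteq] at hx₀nr
  rw [mem_filter] at hx₀nr
  push_neg at hx₀nr
  have hg := hx₀nr (mem_range.2 hx₀m)
  have := hP.2.2 x₀
  exact hng ⟨x₀, hx₀m, by omega⟩

lemma rpHt_succ (k : ℕ) :
    rpHt m n P (k + 1) = if rpW m n P k then rpHt m n P k + 1 else rpHt m n P k - 1 := rfl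

lemma rpHt_eq (hP : IsRP m n P) : ∀ k, k ≤ 2 * (m + n) + 2 →
    rpHt m n P k + k = 2 * NT m n P k := by
  intro k
  induction k with
  | zero => intro _; simp [rpHt, NT_zero]
  | succ k ih =>
    intro hk
    have ih' := ih (by omega)
    rw [rpHt_succ, NT_succ]
    by_cases hw : rpW m n P k
    · rw [if_pos hw, if_pos hw]; omega
    · rw [if_neg hw, if_neg hw]
      -- need rpHt k ≥ 1, i.e. 2 * NT k ≥ k + 1
      have hge : k + 1 ≤ 2 * NT m n P k := by
        rcases Nat.even_or_odd' k with ⟨c, hc | hc⟩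
        · -- k even
          rcases Nat.eq_zero_or_pos c with hc0 | hcpos
          · exfalso; exact hw (by rw [hc, hc0]; simpa using rpW_zero)
          · obtain ⟨c', rfl⟩ : ∃ c', c = c' + 1 := ⟨c - 1, by omega⟩
            have hk' : k = 2 * c' + 2 := by omega
            have hc' : c' < m + n := by omega
            have hng : ¬ polyGreenE m n P c' := by
              rw [← rpW_even hc', ← hk']; exact hw
            have := two_NT_even_gt hP hc' hng
            rw [hk']; omega
        · -- k odd
          rcases Nat.lt_or_ge c (m + n + 1) with hcle | hcgt
          · have := two_NT_odd_ge hP (show c ≤ m + n by omega)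
            rw [hc]; omega
          · -- k = 2c+1 with c ≥ m+n+1: k ≥ 2(m+n)+3 > 2(m+n)+2, contradiction
            omega
      omega

lemma rpW_infinite : (setOf (rpW m n P)).Infinite := by
  apply Set.Infinite.mono (s := Set.Ici (2 * (m + n) + 2))
  · intro k hk
    have hk' : 2 * (m + n) + 2 ≤ k := hk
    show rpW m n P k
    unfold rpW
    rw [if_neg (by omega), if_neg (by omega), if_neg (by omega)]
    trivial
  · exact Set.Ici_infinite _

/-- Main structural description of the rows of `φ(P)`. -/
lemma key_row (hP : IsRP m n P) {i : ℕ} (hi : i < m + n) :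
    (∃ c, c < m + n ∧ c ≤ i ∧ ¬ polyRedE m n P c ∧ i + 1 = NT m n P (2 * c + 1) ∧
      rpRank m n P (i + 1) = 2 * (i - c) + 1) ∨
    (∃ c, c < m + n ∧ c ≤ i ∧ polyGreenE m n P c ∧ i + 1 = NT m n P (2 * c + 2) ∧
      rpRank m n P (i + 1) = 2 * (i - c)) := by
  set k := Nat.nth (rpW m n P) (i + 1) with hkdef
  have hmem : rpW m n P k := Nat.nth_mem_of_infinite rpW_infinite _
  have hcnt : NT m n P k = i + 1 := Nat.count_nth_of_infinite rpW_infinite _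
  have hk1 : 1 ≤ k := by
    rcases Nat.eq_zero_or_pos k with h0 | h; swap
    · exact h
    · exfalso; rw [h0] at hcnt; rw [NT_zero] at hcnt; omega
  have hkle : k ≤ 2 * (m + n) := by
    have htop := NT_top hP
    have : k < 2 * (m + n) + 1 := by
      apply Nat.nth_lt_of_lt_count
      show i + 1 < NT m n P (2 * (m + n) + 1)
      omega
    omega
  have hrank : rpRank m n P (i + 1) = rpHt m n P k := rfl
  have hht : rpHt m n P k + k = 2 * (i + 1) := by
    rw [rpHt_eq hP k (by omega), hcnt]
  rcases Nat.even_or_odd' k with ⟨c, hc | hc⟩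
  · -- k = 2c even, k ≥ 1 so c ≥ 1
    obtain ⟨c', rfl⟩ : ∃ c', c = c' + 1 := ⟨c - 1, by omega⟩
    have hk' : k = 2 * c' + 2 := by omega
    have hc' : c' < m + n := by omega
    right
    refine ⟨c', hc', by omega, (rpW_even hc').1 (by rw [← hk']; exact hmem), ?_, ?_⟩
    · rw [← hk', hcnt]
    · omega
  · have hc' : c < m + n := by omega
    left
    refine ⟨c, hc', by omega, (rpW_odd hc').1 (by rw [← hc]; exact hmem), ?_, ?_⟩
    · rw [← hc, hcnt]
    · omega

lemma key_row_red (hP : IsRP m n P) {c : ℕ} (hc : c < m + n) (hr : ¬ polyRedE m n P c) :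
    ∃ i, i < m + n ∧ c ≤ i ∧ i + 1 = NT m n P (2 * c + 1) ∧
      rpRank m n P (i + 1) = 2 * (i - c) + 1 := by
  have hw : rpW m n P (2 * c + 1) := (rpW_odd hc).2 hr
  have hnth : Nat.nth (rpW m n P) (NT m n P (2 * c + 1)) = 2 * c + 1 := Nat.nth_count hw
  have hpos : 1 ≤ NT m n P (2 * c + 1) := NT_pos (by omega)
  have hub : NT m n P (2 * c + 1) ≤ m + n := by
    have h1 : NT m n P (2 * c + 2) = NT m n P (2 * c + 1) + 1 := by
      rw [NT_succ, if_pos hw]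
    have h2 : NT m n P (2 * c + 2) ≤ NT m n P (2 * (m + n) + 1) := NT_mono (by omega)
    rw [NT_top hP] at h2
    omega
  refine ⟨NT m n P (2 * c + 1) - 1, by omega, ?_, by omega, ?_⟩
  · -- c ≤ i from Dyck bound
    have := two_NT_odd_ge hP (le_of_lt hc)
    omega
  · have hi1 : NT m n P (2 * c + 1) - 1 + 1 = NT m n P (2 * c + 1) := by omega
    rw [hi1]
    have hrank : rpRank m n P (NT m n P (2 * c + 1)) = rpHt m n P (2 * c + 1) := by
      unfold rpRank; rw [hnth]
    rw [hrank]
    have hht := rpHt_eq hP (2 * c + 1) (by omega)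
    have := two_NT_odd_ge hP (le_of_lt hc)
    omega

lemma key_row_green (hP : IsRP m n P) {c : ℕ} (hc : c < m + n) (hg : polyGreenE m n P c) :
    ∃ i, i < m + n ∧ c ≤ i ∧ i + 1 = NT m n P (2 * c + 2) ∧
      rpRank m n P (i + 1) = 2 * (i - c) := by
  have hw : rpW m n P (2 * c + 2) := (rpW_even hc).2 hg
  have hnth : Nat.nth (rpW m n P) (NT m n P (2 * c + 2)) = 2 * c + 2 := Nat.nth_count hw
  have hpos : 1 ≤ NT m n P (2 * c + 2) := NT_pos (by omega)
  have hub : NT m n P (2 * c + 2) ≤ m + n := by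
    have h1 : NT m n P (2 * c + 3) = NT m n P (2 * c + 2) + 1 := by
      rw [NT_succ, if_pos hw]
    have h2 : NT m n P (2 * c + 3) ≤ NT m n P (2 * (m + n) + 1) := NT_mono (by omega)
    rw [NT_top hP] at h2
    omega
  refine ⟨NT m n P (2 * c + 2) - 1, by omega, ?_, by omega, ?_⟩
  · have := two_NT_even_ge hP hc
    omega
  · have hi1 : NT m n P (2 * c + 2) - 1 + 1 = NT m n P (2 * c + 2) := by omega
    rw [hi1]
    have hrank : rpRank m n P (NT m n P (2 * c + 2)) = rpHt m n P (2 * c + 2) := by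
      unfold rpRank; rw [hnth]
    rw [hrank]
    have hht := rpHt_eq hP (2 * c + 2) (by omega)
    have := two_NT_even_ge hP hc
    omega


/-! ### The two car parking function `φ(P)` -/

variable (m n P) in
/-- The area word of `φ(P)` (as a function `ℕ → ℕ`). -/
noncomputable def wF (i : ℕ) : ℕ := rpVal m n P (i + 1)

variable (m n P) in
/-- The labels of `φ(P)`. -/
noncomputable def lF (i : ℕ) : ℕ := if rpRank m n P (i + 1) % 2 = 1 then 1 else 2

lemma row_red_data (hP : IsRP m n P) {i c : ℕ} (hci : c ≤ i)
    (hrank : rpRank m n P (i + 1) = 2 * (i - c) + 1) :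
    wF m n P i = i - c ∧ i - wF m n P i = c ∧ lF m n P i = 1 := by
  have hw : wF m n P i = i - c := by
    unfold wF rpVal; rw [hrank]; omega
  refine ⟨hw, by omega, ?_⟩
  unfold lF
  rw [if_pos (by rw [hrank]; omega)]

lemma row_green_data (hP : IsRP m n P) {i c : ℕ} (hci : c ≤ i)
    (hrank : rpRank m n P (i + 1) = 2 * (i - c)) :
    wF m n P i = i - c ∧ i - wF m n P i = c ∧ lF m n P i = 2 := by
  have hw : wF m n P i = i - c := by
    unfold wF rpVal; rw [hrank]; omega
  refine ⟨hw, by omega, ?_⟩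
  unfold lF
  rw [if_neg (by rw [hrank]; omega)]

lemma col_set (hP : IsRP m n P) {c : ℕ} (hc : c < m + n) :
    ((range (m + n)).filter fun i => i - wF m n P i = c) =
      (if polyGreenE m n P c then ({NT m n P (2 * c + 2) - 1} : Finset ℕ) else ∅) ∪
      (if ¬ polyRedE m n P c then ({NT m n P (2 * c + 1) - 1} : Finset ℕ) else ∅) := by
  ext i
  rw [mem_filter, mem_range, mem_union]
  constructor
  · rintro ⟨hi, hcol⟩
    rcases key_row hP hi with ⟨c₁, hc₁, hc₁i, hred, hNT, hrank⟩ |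
        ⟨c₁, hc₁, hc₁i, hgreen, hNT, hrank⟩
    · have hdata := row_red_data hP hc₁i hrank
      have hcc : c₁ = c := by rw [hdata.2.1] at hcol; exact hcol
      subst hcc
      right
      rw [if_pos hred, mem_singleton]
      omega
    · have hdata := row_green_data hP hc₁i hrank
      have hcc : c₁ = c := by rw [hdata.2.1] at hcol; exact hcol
      subst hcc
      left
      rw [if_pos hgreen, mem_singleton]
      omega
  · rintro (hmem | hmem)
    · by_cases hg : polyGreenE m n P c
      · rw [if_pos hg, mem_singleton] at hmem
        obtain ⟨i', hi', hci', hNT, hrank⟩ := key_row_green hP hc hg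
        have hii : i = i' := by omega
        subst hii
        have hdata := row_green_data hP hci' hrank
        exact ⟨hi', hdata.2.1⟩
      · rw [if_neg hg] at hmem; exact absurd hmem (notMem_empty i)
    · by_cases hr : polyRedE m n P c
      · rw [if_neg (not_not_intro hr)] at hmem; exact absurd hmem (notMem_empty i)
      · rw [if_pos hr, mem_singleton] at hmem
        obtain ⟨i', hi', hci', hNT, hrank⟩ := key_row_red hP hc hr
        have hii : i = i' := by omega
        subst hii
        have hdata := row_red_data hP hci' hrank
        exact ⟨hi', hdata.2.1⟩

lemma colLab_eq (hP : IsRP m n P) {c : ℕ} (hc : c < m + n) :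
    ldColLab (m + n) (wF m n P) (lF m n P) c =
      (if polyGreenE m n P c then ({2} : Multiset ℕ) else 0) +
      (if ¬ polyRedE m n P c then ({1} : Multiset ℕ) else 0) := by
  unfold ldColLab
  rw [col_set hP hc]
  by_cases hg : polyGreenE m n P c <;> by_cases hr : polyRedE m n P c
  · -- green yes, red yes: only the green singleton
    rw [if_pos hg, if_neg (not_not_intro hr), if_pos hg, if_neg (not_not_intro hr)]
    rw [union_empty]
    obtain ⟨i', hi', hci', hNT, hrank⟩ := key_row_green hP hc hg
    have hdata := row_green_data hP hci' hrank
    have hival : NT m n P (2 * c + 2) - 1 = i' := by omega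
    rw [hival]
    simp [hdata.2.2]
  · -- green yes, red no: two elements
    rw [if_pos hg, if_pos hr, if_pos hg, if_pos hr]
    obtain ⟨i₂, hi₂, hci₂, hNT₂, hrank₂⟩ := key_row_green hP hc hg
    obtain ⟨i₁, hi₁, hci₁, hNT₁, hrank₁⟩ := key_row_red hP hc hr
    have hd₂ := row_green_data hP hci₂ hrank₂
    have hd₁ := row_red_data hP hci₁ hrank₁
    have hv₂ : NT m n P (2 * c + 2) - 1 = i₂ := by omega
    have hv₁ : NT m n P (2 * c + 1) - 1 = i₁ := by omega
    have hstep : NT m n P (2 * c + 2) = NT m n P (2 * c + 1) + 1 := by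
      rw [NT_succ, if_pos ((rpW_odd hc).2 hr)]
    have hne : i₂ ≠ i₁ := by omega
    rw [hv₂, hv₁]
    have hun : ({i₂} ∪ {i₁} : Finset ℕ) = insert i₂ {i₁} := by
      ext a; simp
    rw [hun, Finset.insert_val_of_notMem (by simpa using hne)]
    simp [hd₂.2.2, hd₁.2.2]
  · -- green no, red yes: empty
    rw [if_neg hg, if_neg (not_not_intro hr), if_neg hg, if_neg (not_not_intro hr)]
    simp
  · -- green no, red no: red singleton
    rw [if_neg hg, if_pos hr, if_neg hg, if_pos hr]
    rw [empty_union]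
    obtain ⟨i₁, hi₁, hci₁, hNT₁, hrank₁⟩ := key_row_red hP hc hr
    have hd₁ := row_red_data hP hci₁ hrank₁
    have hv₁ : NT m n P (2 * c + 1) - 1 = i₁ := by omega
    rw [hv₁]
    simp [hd₁.2.2]

lemma colLab_count2 (hP : IsRP m n P) {c : ℕ} (hc : c < m + n) :
    (ldColLab (m + n) (wF m n P) (lF m n P) c).count 2 =
      if polyGreenE m n P c then 1 else 0 := by
  rw [colLab_eq hP hc]
  by_cases hg : polyGreenE m n P c <;> by_cases hr : polyRedE m n P c <;>
    simp [hg, hr, Multiset.count_singleton]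

lemma colLab_count1 (hP : IsRP m n P) {c : ℕ} (hc : c < m + n) :
    (ldColLab (m + n) (wF m n P) (lF m n P) c).count 1 =
      if polyRedE m n P c then 0 else 1 := by
  rw [colLab_eq hP hc]
  by_cases hg : polyGreenE m n P c <;> by_cases hr : polyRedE m n P c <;>
    simp [hg, hr, Multiset.count_singleton]

lemma colLab_pure (hP : IsRP m n P) {c : ℕ} (hc : c < m + n) :
    ∀ x ∈ ldColLab (m + n) (wF m n P) (lF m n P) c, x = 1 ∨ x = 2 := by
  rw [colLab_eq hP hc]
  intro x hx
  rw [Multiset.mem_add] at hx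
  rcases hx with hx | hx
  · right
    by_cases hg : polyGreenE m n P c
    · rw [if_pos hg, Multiset.mem_singleton] at hx; exact hx
    · rw [if_neg hg] at hx; exact absurd hx (Multiset.notMem_zero x)
  · left
    by_cases hr : polyRedE m n P c
    · rw [if_neg (not_not_intro hr)] at hx; exact absurd hx (Multiset.notMem_zero x)
    · rw [if_pos hr, Multiset.mem_singleton] at hx; exact hx


/-! ### The bounce path -/

variable (m n P) in
noncomputable def csq (k : ℕ) : ℕ := (rpSeq m n P k).1
variable (m n P) in
noncomputable def hsq (k : ℕ) : ℕ := (rpSeq m n P k).2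

lemma csq_zero : csq m n P 0 = 0 := rfl
lemma hsq_zero : hsq m n P 0 = 0 := rfl

lemma csq_succ (k : ℕ) : csq m n P (k + 1) = CBc m n P (hsq m n P k) := rfl
lemma hsq_succ (k : ℕ) : hsq m n P (k + 1) = rH m n P (csq m n P (k + 1)) := rfl

lemma rH_out {x : ℕ} (hx : m ≤ x) : rH m n P x = n := by
  unfold rH; rw [dif_neg (by omega)]

lemma csq_le_m (k : ℕ) : csq m n P k ≤ m := by
  cases k with
  | zero => simp [csq_zero]
  | succ k => rw [csq_succ]; exact CBc_le_m (P := P) _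

lemma hsq_le_n (k : ℕ) : hsq m n P k ≤ n := by
  cases k with
  | zero => simp [hsq_zero]
  | succ k => rw [hsq_succ]; exact rH_le _

lemma char_csq (hP : IsRP m n P) {x : ℕ} (hx : x < m) (k : ℕ) :
    x < csq m n P (k + 1) ↔ gH m n P x ≤ hsq m n P k := by
  rw [csq_succ]; exact char_CBc hP hx

lemma seq_mono (hP : IsRP m n P) :
    ∀ k, hsq m n P k ≤ hsq m n P (k + 1) ∧ csq m n P k ≤ csq m n P (k + 1) := by
  intro k
  induction k with
  | zero => exact ⟨by rw [hsq_zero]; omega, by rw [csq_zero]; omega⟩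
  | succ k ih =>
    have hcs : csq m n P (k + 1) ≤ csq m n P (k + 2) := by
      rw [csq_succ, csq_succ]
      exact CBc_mono ih.1
    refine ⟨?_, hcs⟩
    rw [hsq_succ, hsq_succ]
    exact rH_mono hP hcs

lemma csq_mono (hP : IsRP m n P) : Monotone (csq m n P) :=
  monotone_nat_of_le_succ fun k => (seq_mono hP k).2

lemma hsq_mono (hP : IsRP m n P) : Monotone (hsq m n P) :=
  monotone_nat_of_le_succ fun k => (seq_mono hP k).1

lemma csq_prog (hP : IsRP m n P) {k : ℕ} (hk : 1 ≤ k) (hcm : csq m n P k < m) :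
    csq m n P k < csq m n P (k + 1) := by
  obtain ⟨k', rfl⟩ : ∃ k', k = k' + 1 := ⟨k - 1, by omega⟩
  have hh : hsq m n P (k' + 1) = rH m n P (csq m n P (k' + 1)) := hsq_succ k'
  rw [char_csq hP hcm (k' + 1), hh]
  exact gH_le_rH hP _

lemma csq_m_hsq (hP : IsRP m n P) {k : ℕ} (hk : 1 ≤ k) (hc : csq m n P k = m) :
    hsq m n P k = n := by
  obtain ⟨k', rfl⟩ : ∃ k', k = k' + 1 := ⟨k - 1, by omega⟩
  rw [hsq_succ, hc, rH_out (le_refl m)]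

lemma nonstall_h (hP : IsRP m n P) {k : ℕ}
    (hlt : csq m n P (k + 1) + hsq m n P k < m + n) :
    hsq m n P k < hsq m n P (k + 1) := by
  by_contra hle
  have heq : hsq m n P (k + 1) = hsq m n P k := by
    have := (seq_mono hP k).1; omega
  have hceq : csq m n P (k + 2) = csq m n P (k + 1) := by
    rw [csq_succ, csq_succ, heq]
  have hcm : csq m n P (k + 1) = m := by
    by_contra hne
    have h1 : csq m n P (k + 1) < m := by
      have := csq_le_m (P := P) (k + 1); omega
    have h2 := csq_prog hP (show 1 ≤ k + 1 by omega) h1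
    rw [show k + 1 + 1 = k + 2 from rfl] at h2
    omega
  have := csq_m_hsq hP (by omega) hcm
  omega

lemma nonstall_c (hP : IsRP m n P) {k : ℕ}
    (hlt : csq m n P (k + 1) + hsq m n P (k + 1) < m + n) :
    csq m n P (k + 1) < csq m n P (k + 2) := by
  by_cases hcm : csq m n P (k + 1) = m
  · have := csq_m_hsq hP (by omega) hcm
    omega
  · exact csq_prog hP (by omega) (by have := csq_le_m (P := P) (k + 1); omega)

/-- `j` is within a horizontal run of the bounce path. -/
def EPh (j : ℕ) : Prop := ∃ k, csq m n P k + hsq m n P k ≤ j ∧ j < csq m n P (k + 1) + hsq m n P k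

/-- `j` is within a vertical run of the bounce path. -/
def NPh (j : ℕ) : Prop :=
  ∃ k, csq m n P (k + 1) + hsq m n P k ≤ j ∧ j < csq m n P (k + 1) + hsq m n P (k + 1)

lemma phase_excl (hP : IsRP m n P) {j : ℕ} (hE : EPh (m := m) (n := n) (P := P) j)
    (hN : NPh (m := m) (n := n) (P := P) j) : False := by
  obtain ⟨k1, hE1, hE2⟩ := hE
  obtain ⟨k2, hN1, hN2⟩ := hN
  rcases le_or_gt k1 k2 with h | h
  · have h1 : csq m n P (k1 + 1) ≤ csq m n P (k2 + 1) := csq_mono hP (by omega)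
    have h2 : hsq m n P k1 ≤ hsq m n P k2 := hsq_mono hP h
    omega
  · have h1 : csq m n P (k2 + 1) ≤ csq m n P k1 := csq_mono hP (by omega)
    have h2 : hsq m n P (k2 + 1) ≤ hsq m n P k1 := hsq_mono hP (by omega)
    omega

/-! ### Multiset helpers -/

lemma sup_eq_two {C : Multiset ℕ} (hpure : ∀ x ∈ C, x = 1 ∨ x = 2)
    (h2 : 1 ≤ C.count 2) : C.sup = 2 := by
  have hmem : (2 : ℕ) ∈ C := by rw [← Multiset.count_pos]; omega
  refine le_antisymm ?_ (Multiset.le_sup hmem)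
  apply Multiset.sup_le.2
  intro x hx
  rcases hpure x hx with h | h <;> omega

lemma sup_eq_one {C : Multiset ℕ} (hpure : ∀ x ∈ C, x = 1 ∨ x = 2)
    (h2 : C.count 2 = 0) (h1 : 1 ≤ C.count 1) : C.sup = 1 := by
  have hmem : (1 : ℕ) ∈ C := by rw [← Multiset.count_pos]; omega
  refine le_antisymm ?_ (Multiset.le_sup hmem)
  apply Multiset.sup_le.2
  intro x hx
  rcases hpure x hx with h | h
  · omega
  · exfalso
    have : 0 < C.count 2 := Multiset.count_pos.2 (h ▸ hx)
    omega

lemma filter_le_two {C : Multiset ℕ} (hpure : ∀ x ∈ C, x = 1 ∨ x = 2) :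
    C.filter (fun x => x ≤ 2) = C := by
  apply Multiset.filter_eq_self.2
  intro x hx
  rcases hpure x hx with h | h <;> omega

lemma filter_le_one_eq {C : Multiset ℕ} (hpure : ∀ x ∈ C, x = 1 ∨ x = 2) :
    C.filter (fun x => x ≤ 1) = Multiset.replicate (C.count 1) 1 := by
  have h1 : C.filter (fun x => x ≤ 1) = C.filter (fun x => x = 1) := by
    apply Multiset.filter_congr
    intro x hx
    rcases hpure x hx with h | h <;> constructor <;> omega
  rw [h1]
  exact Multiset.filter_eq' C 1


lemma F1_zero_iff {C : Multiset ℕ} (hpure : ∀ x ∈ C, x = 1 ∨ x = 2) :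
    C.filter (fun x => x ≤ 1) = 0 ↔ C.count 1 = 0 := by
  rw [filter_le_one_eq hpure]
  constructor
  · intro h
    by_contra hne
    have : (1:ℕ) ∈ Multiset.replicate (C.count 1) 1 := Multiset.mem_replicate.2 ⟨hne, rfl⟩
    rw [h] at this
    exact Multiset.notMem_zero _ this
  · intro h; rw [h, Multiset.replicate_zero]

lemma F1_sup {C : Multiset ℕ} (hpure : ∀ x ∈ C, x = 1 ∨ x = 2) (h1 : 1 ≤ C.count 1) :
    (C.filter (fun x => x ≤ 1)).sup = 1 := by
  rw [filter_le_one_eq hpure]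
  refine le_antisymm (Multiset.sup_le.2 fun b hb => ?_) (Multiset.le_sup ?_)
  · rw [Multiset.eq_of_mem_replicate hb]
  · rw [Multiset.mem_replicate]
    exact ⟨by omega, rfl⟩

/-! ### The parking algorithm on `φ(P)` -/

variable (m n P) in
noncomputable def CmS (j : ℕ) : Multiset ℕ := (ldPAux (m + n) (wF m n P) (lF m n P) j).1
variable (m n P) in
noncomputable def pkS (j : ℕ) : ℕ := ldPword (m + n) (wF m n P) (lF m n P) j

lemma CmS_zero : CmS m n P 0 = ldColLab (m + n) (wF m n P) (lF m n P) 0 := rfl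
lemma pkS_zero : pkS m n P 0 = (ldColLab (m + n) (wF m n P) (lF m n P) 0).sup := rfl

lemma CmS_succ (j : ℕ) : CmS m n P (j + 1) =
    (CmS m n P j).erase (pkS m n P j) + ldColLab (m + n) (wF m n P) (lF m n P) (j + 1) := rfl

lemma pkS_succ (j : ℕ) : pkS m n P (j + 1) =
    if (CmS m n P (j + 1)).filter (fun x => x ≤ pkS m n P j) = 0
    then (CmS m n P (j + 1)).sup
    else ((CmS m n P (j + 1)).filter (fun x => x ≤ pkS m n P j)).sup := rfl

variable (m n P) in
/-- Invariant: at time `j` we are in the `k`-th horizontal run of the bounce path. -/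
def InvE (j k : ℕ) : Prop :=
  csq m n P k + hsq m n P k ≤ j ∧ j < csq m n P (k + 1) + hsq m n P k ∧
  pkS m n P j = 2 ∧ 1 ≤ (CmS m n P j).count 2 ∧
  (CmS m n P j).count 2 + j = GEc m n P (j + 1) + hsq m n P k ∧
  (CmS m n P j).count 1 + REc m n P (j + 1) + hsq m n P k = j + 1

variable (m n P) in
/-- Invariant: at time `j` we are in the `k`-th vertical run of the bounce path. -/
def InvN (j k : ℕ) : Prop :=
  csq m n P (k + 1) + hsq m n P k ≤ j ∧ j < csq m n P (k + 1) + hsq m n P (k + 1) ∧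
  pkS m n P j = 1 ∧ 1 ≤ (CmS m n P j).count 1 ∧
  (CmS m n P j).count 2 + csq m n P (k + 1) = GEc m n P (j + 1) ∧
  (CmS m n P j).count 1 + REc m n P (j + 1) = csq m n P (k + 1) + 1

variable (m n P) in
def InvA (j : ℕ) : Prop :=
  (∀ x ∈ CmS m n P j, x = 1 ∨ x = 2) ∧ ∃ k, InvE m n P j k ∨ InvN m n P j k

theorem master (hP : IsRP m n P) : ∀ j, j < m + n → InvA m n P j := by
  intro j
  induction j with
  | zero =>
    intro h0
    have hpure : ∀ x ∈ CmS m n P 0, x = 1 ∨ x = 2 := by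
      rw [CmS_zero]; exact colLab_pure hP h0
    have hc2 := colLab_count2 hP h0
    have hc1 := colLab_count1 hP h0
    rw [← CmS_zero] at hc2 hc1
    have hGE1 : GEc m n P 1 = if polyGreenE m n P 0 then 1 else 0 := by
      have h := GEc_succ hP 0; rw [GEc_zero, show (0:ℕ)+1 = 1 from rfl] at h; omega
    have hRE1 : REc m n P 1 = if polyRedE m n P 0 then 1 else 0 := by
      have h := REc_succ hP 0; rw [REc_zero, show (0:ℕ)+1 = 1 from rfl] at h; omega
    refine ⟨hpure, 0, ?_⟩
    by_cases hg : polyGreenE m n P 0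
    · left
      obtain ⟨x, hxm, hxe⟩ := hg
      have hx00 : x = 0 := by omega
      subst hx00
      have hx0 : gH m n P 0 = 0 := by omega
      have hm0 : 0 < m := hxm.trans_le' (by omega)
      have hcs1 : 0 < csq m n P 1 := by
        rw [char_csq hP hm0 0, hsq_zero]
        omega
      have hpos2 : 1 ≤ (CmS m n P 0).count 2 := by rw [hc2, if_pos ⟨0, hxm, hxe⟩]
      have h01 : (0:ℕ) + 1 = 1 := rfl
      refine ⟨by simp [csq_zero, hsq_zero], ?_, ?_, hpos2, ?_, ?_⟩
      · rw [h01, hsq_zero]; omega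
      · rw [pkS_zero, ← CmS_zero]
        exact sup_eq_two hpure hpos2
      · rw [hc2, if_pos ⟨0, hxm, hxe⟩, h01, hGE1, if_pos ⟨0, hxm, hxe⟩, hsq_zero]
      · rw [hc1, h01, hRE1, hsq_zero]
        by_cases hr : polyRedE m n P 0 <;> simp [hr]
    · right
      have hnr : ¬ polyRedE m n P 0 := by
        rintro ⟨x, hxm, hxe⟩
        have hx00 : x = 0 := by omega
        subst hx00
        have hx0 : rH m n P 0 = 0 := by omega
        have := hP.2.2 0
        exact hg ⟨0, by omega, by omega⟩
      have hcs1 : csq m n P 1 = 0 := by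
        by_contra hne
        have hm0 : 0 < m := by
          by_contra hm
          have : csq m n P 1 ≤ m := csq_le_m _
          omega
        have h01 : 0 < csq m n P 1 := by omega
        rw [char_csq hP hm0 0, hsq_zero] at h01
        exact hg ⟨0, hm0, by omega⟩
      have hpos1 : 1 ≤ (CmS m n P 0).count 1 := by rw [hc1, if_neg hnr]
      have hn2 : (CmS m n P 0).count 2 = 0 := by rw [hc2, if_neg hg]
      have hhs1 : 0 < hsq m n P 1 := by
        rw [hsq_succ, hcs1]
        rcases Nat.eq_zero_or_pos m with hm | hm
        · rw [rH_out (by omega)]; omega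
        · have h1 := hP.2.2 0
          have h2 : gH m n P 0 ≠ 0 := fun h => hg ⟨0, hm, by omega⟩
          omega
      have h01 : (0:ℕ) + 1 = 1 := rfl
      refine ⟨?_, ?_, ?_, hpos1, ?_, ?_⟩
      · rw [h01, hcs1, hsq_zero]
      · rw [h01, hcs1]; omega
      · rw [pkS_zero, ← CmS_zero]
        exact sup_eq_one hpure hn2 hpos1
      · rw [hn2, h01, hcs1, hGE1, if_neg hg]
      · rw [hc1, if_neg hnr, h01, hRE1, if_neg hnr, hcs1]
  | succ j ih =>
    intro hj1
    obtain ⟨hpure, k, hEN⟩ := ih (by omega)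
    have hGEs := GEc_succ hP (j + 1)
    have hREs := REc_succ hP (j + 1)
    rw [show j + 1 + 1 = j + 2 from rfl] at hGEs hREs
    have hgrow2 : (CmS m n P (j + 1)).count 2 =
        ((CmS m n P j).erase (pkS m n P j)).count 2 +
          (if polyGreenE m n P (j + 1) then 1 else 0) := by
      rw [CmS_succ, Multiset.count_add, colLab_count2 hP hj1]
    have hgrow1 : (CmS m n P (j + 1)).count 1 =
        ((CmS m n P j).erase (pkS m n P j)).count 1 +
          (if polyRedE m n P (j + 1) then 0 else 1) := by
      rw [CmS_succ, Multiset.count_add, colLab_count1 hP hj1]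
    have hpure1 : ∀ x ∈ CmS m n P (j + 1), x = 1 ∨ x = 2 := by
      rw [CmS_succ]
      intro x hx
      rw [Multiset.mem_add] at hx
      rcases hx with hx | hx
      · exact hpure x (Multiset.mem_of_mem_erase hx)
      · exact colLab_pure hP hj1 x hx
    rcases hEN with ⟨hlo, hhi, hpk, hpos2, heq2, heq1⟩ | ⟨hlo, hhi, hpk, hpos1, heq2, heq1⟩
    · -- E phase at j
      have herase2 : ((CmS m n P j).erase (pkS m n P j)).count 2 = (CmS m n P j).count 2 - 1 := by
        rw [hpk]; exact Multiset.count_erase_self _ _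
      have herase1 : ((CmS m n P j).erase (pkS m n P j)).count 1 = (CmS m n P j).count 1 := by
        rw [hpk]; exact Multiset.count_erase_of_ne (by omega) _
      have heq2' : (CmS m n P (j + 1)).count 2 + (j + 1) =
          GEc m n P (j + 2) + hsq m n P k := by
        by_cases hgr : polyGreenE m n P (j + 1) <;>
          [rw [if_pos hgr] at hgrow2 hGEs; rw [if_neg hgr] at hgrow2 hGEs] <;> omega
      have heq1' : (CmS m n P (j + 1)).count 1 + REc m n P (j + 2) + hsq m n P k = j + 2 := by
        by_cases hrd : polyRedE m n P (j + 1) <;>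
          [rw [if_pos hrd] at hgrow1 hREs; rw [if_neg hrd] at hgrow1 hREs] <;> omega
      by_cases hcorner : j + 1 < csq m n P (k + 1) + hsq m n P k
      · -- stay in E phase
        have hhk_le : hsq m n P k ≤ j := by omega
        have hx0lt : j + 1 - hsq m n P k < csq m n P (k + 1) := by omega
        have hx0m : j + 1 - hsq m n P k < m := lt_of_lt_of_le hx0lt (csq_le_m _)
        have hg0 : gH m n P (j + 1 - hsq m n P k) ≤ hsq m n P k := (char_csq hP hx0m k).1 hx0lt
        have hGEgt : j + 1 - hsq m n P k < GEc m n P (j + 2) := (char_GEc hP hx0m).2 (by omega)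
        have hpos2' : 1 ≤ (CmS m n P (j + 1)).count 2 := by omega
        have hmem2 : (2 : ℕ) ∈ CmS m n P (j + 1) := Multiset.count_pos.1 (by omega)
        have hpk' : pkS m n P (j + 1) = 2 := by
          rw [pkS_succ, hpk, filter_le_two hpure1, if_neg (fun h0 => by
            rw [h0] at hmem2; exact Multiset.notMem_zero _ hmem2)]
          exact sup_eq_two hpure1 hpos2'
        exact ⟨hpure1, k, Or.inl ⟨by omega, hcorner, hpk', hpos2', heq2', heq1'⟩⟩
      · -- corner: switch to N phase with the same k
        have hc_eq : j + 1 = csq m n P (k + 1) + hsq m n P k := by omega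
        have hh_lt : hsq m n P k < hsq m n P (k + 1) := nonstall_h hP (by omega)
        have hGEle : GEc m n P (j + 2) ≤ csq m n P (k + 1) := by
          by_contra hgt
          have hcm : csq m n P (k + 1) < m := by
            have := GEc_le_m (P := P) (t := j + 2); omega
          have h1 : gH m n P (csq m n P (k + 1)) + csq m n P (k + 1) < j + 2 :=
            (char_GEc hP hcm).1 (by omega)
          have h2 : gH m n P (csq m n P (k + 1)) ≤ hsq m n P k := by omega
          have h3 : csq m n P (k + 1) < csq m n P (k + 1) := (char_csq hP hcm k).2 h2
          omega
        have hn2 : (CmS m n P (j + 1)).count 2 = 0 := by omega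
        have hREle : REc m n P (j + 2) ≤ csq m n P (k + 1) := by
          by_contra hgt
          have hcm : csq m n P (k + 1) < m := by
            have := REc_le_m (P := P) (t := j + 2); omega
          have h1 : rH m n P (csq m n P (k + 1)) + csq m n P (k + 1) < j + 2 :=
            (char_REc hP hcm).1 (by omega)
          have h2 : hsq m n P (k + 1) = rH m n P (csq m n P (k + 1)) := hsq_succ k
          omega
        have hpos1' : 1 ≤ (CmS m n P (j + 1)).count 1 := by omega
        have hmem1 : (1 : ℕ) ∈ CmS m n P (j + 1) := Multiset.count_pos.1 (by omega)
        have hpk' : pkS m n P (j + 1) = 1 := by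
          rw [pkS_succ, hpk, filter_le_two hpure1, if_neg (fun h0 => by
            rw [h0] at hmem1; exact Multiset.notMem_zero _ hmem1)]
          exact sup_eq_one hpure1 hn2 hpos1'
        refine ⟨hpure1, k, Or.inr ⟨by omega, by omega, hpk', hpos1', ?_, ?_⟩⟩ <;>
          (rw [show j + 1 + 1 = j + 2 from rfl]; omega)
    · -- N phase at j
      have herase2 : ((CmS m n P j).erase (pkS m n P j)).count 2 = (CmS m n P j).count 2 := by
        rw [hpk]; exact Multiset.count_erase_of_ne (by omega) _
      have herase1 : ((CmS m n P j).erase (pkS m n P j)).count 1 = (CmS m n P j).count 1 - 1 := by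
        rw [hpk]; exact Multiset.count_erase_self _ _
      have heq2'' : (CmS m n P (j + 1)).count 2 + csq m n P (k + 1) = GEc m n P (j + 2) := by
        by_cases hgr : polyGreenE m n P (j + 1) <;>
          [rw [if_pos hgr] at hgrow2 hGEs; rw [if_neg hgr] at hgrow2 hGEs] <;> omega
      have heq1'' : (CmS m n P (j + 1)).count 1 + REc m n P (j + 2) =
          csq m n P (k + 1) + 1 := by
        by_cases hrd : polyRedE m n P (j + 1) <;>
          [rw [if_pos hrd] at hgrow1 hREs; rw [if_neg hrd] at hgrow1 hREs] <;> omega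
      have hhs : hsq m n P (k + 1) = rH m n P (csq m n P (k + 1)) := hsq_succ k
      by_cases hcorner : j + 1 < csq m n P (k + 1) + hsq m n P (k + 1)
      · -- stay in N phase
        have hREle : REc m n P (j + 2) ≤ csq m n P (k + 1) := by
          by_contra hgt
          have hcm : csq m n P (k + 1) < m := by
            have := REc_le_m (P := P) (t := j + 2); omega
          have h1 : rH m n P (csq m n P (k + 1)) + csq m n P (k + 1) < j + 2 :=
            (char_REc hP hcm).1 (by omega)
          omega
        have hpos1' : 1 ≤ (CmS m n P (j + 1)).count 1 := by omega
        have hpk' : pkS m n P (j + 1) = 1 := by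
          rw [pkS_succ, hpk, if_neg (fun h0 => by
            rw [F1_zero_iff hpure1] at h0; omega)]
          exact F1_sup hpure1 hpos1'
        exact ⟨hpure1, k, Or.inr ⟨by omega, hcorner, hpk', hpos1', heq2'', heq1''⟩⟩
      · -- corner: switch to E phase with k+1
        have hc_eq : j + 1 = csq m n P (k + 1) + hsq m n P (k + 1) := by omega
        have hcs_lt : csq m n P (k + 1) < csq m n P (k + 2) := nonstall_c hP (by omega)
        have hcm : csq m n P (k + 1) < m := by
          by_contra hge
          have hc_eq2 : csq m n P (k + 1) = m := by
            have := csq_le_m (P := P) (k + 1); omega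
          have := csq_m_hsq hP (by omega) hc_eq2
          omega
        have hREge : csq m n P (k + 1) < REc m n P (j + 2) :=
          (char_REc hP hcm).2 (by omega)
        have hn1 : (CmS m n P (j + 1)).count 1 = 0 := by omega
        have hGEge : csq m n P (k + 1) < GEc m n P (j + 2) := by
          apply (char_GEc hP hcm).2
          have := gH_le_rH hP (csq m n P (k + 1))
          omega
        have hpos2' : 1 ≤ (CmS m n P (j + 1)).count 2 := by omega
        have hpk' : pkS m n P (j + 1) = 2 := by
          rw [pkS_succ, hpk, if_pos ((F1_zero_iff hpure1).2 hn1)]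
          exact sup_eq_two hpure1 hpos2'
        refine ⟨hpure1, k + 1, Or.inl ⟨by omega, ?_, hpk', hpos2', ?_, ?_⟩⟩
        · rw [show k + 1 + 1 = k + 2 from rfl]
          omega
        · rw [show j + 1 + 1 = j + 2 from rfl]; omega
        · rw [show j + 1 + 1 = j + 2 from rfl]; omega


/-! ### Final assembly -/

lemma count_ge (c t : ℕ) : ((range t).filter fun x => c ≤ x).card = t - c := by
  have h : ((range t).filter fun x => c ≤ x) = Finset.Ico c t := by
    ext z
    rw [mem_filter, mem_range, Finset.mem_Ico]
    omega
  rw [h, Nat.card_Ico]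

lemma count_gt (h t : ℕ) : ((Finset.Icc 1 t).filter fun y => h < y).card = t - h := by
  have he : ((Finset.Icc 1 t).filter fun y => h < y) = Finset.Icc (h + 1) t := by
    ext z
    rw [mem_filter, Finset.mem_Icc, Finset.mem_Icc]
    omega
  rw [he, Nat.card_Icc]
  omega

lemma bounce_sum (hP : IsRP m n P) : rpBounce m n P =
    ∑ k ∈ Finset.Icc 1 (m + n + 1), ((m + n) - (csq m n P k + hsq m n P k)) := by
  unfold rpBounce
  have h1 : ∑ x ∈ range m, rpHval m n P x =
      ∑ k ∈ Finset.Icc 1 (m + n + 1), (m - csq m n P k) := by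
    unfold rpHval
    rw [Finset.sum_congr rfl fun x _ => Finset.card_filter _ _]
    rw [Finset.sum_comm]
    refine Finset.sum_congr rfl fun k _ => ?_
    rw [← Finset.card_filter]
    exact count_ge (csq m n P k) m
  have h2 : ∑ y ∈ Finset.Icc 1 n, rpVval m n P y =
      ∑ k ∈ Finset.Icc 1 (m + n + 1), (n - hsq m n P k) := by
    unfold rpVval
    rw [Finset.sum_congr rfl fun y _ => Finset.card_filter _ _]
    rw [Finset.sum_comm]
    refine Finset.sum_congr rfl fun k _ => ?_
    rw [← Finset.card_filter]
    exact count_gt (hsq m n P k) n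
  rw [h1, h2, ← Finset.sum_add_distrib]
  refine Finset.sum_congr rfl fun k _ => ?_
  have hc := csq_le_m (P := P) k
  have hh := hsq_le_n (P := P) k
  omega

lemma corner_lb (hP : IsRP m n P) :
    ∀ k, csq m n P (k + 1) + hsq m n P (k + 1) < m + n →
      k + 1 ≤ csq m n P (k + 1) + hsq m n P (k + 1) + 1 := by
  intro k
  induction k with
  | zero => intro _; omega
  | succ k ih =>
    intro h
    rw [show k + 1 + 1 = k + 2 from rfl] at h ⊢
    have hmono : csq m n P (k + 1) + hsq m n P (k + 1) ≤
        csq m n P (k + 2) + hsq m n P (k + 2) := by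
      have := csq_mono hP (show k + 1 ≤ k + 2 by omega)
      have := hsq_mono hP (show k + 1 ≤ k + 2 by omega)
      omega
    have ih' := ih (by omega)
    have hprog := nonstall_c hP (show csq m n P (k+1) + hsq m n P (k+1) < m + n by omega)
    have := hsq_mono hP (show k + 1 ≤ k + 2 by omega)
    omega

lemma corner_pos (hP : IsRP m n P) {k : ℕ} (hk : 1 ≤ k)
    (hN : csq m n P k + hsq m n P k < m + n) : 1 ≤ csq m n P k + hsq m n P k := by
  by_contra h0
  obtain ⟨k', rfl⟩ : ∃ k', k = k' + 1 := ⟨k - 1, by omega⟩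
  have hh' : hsq m n P k' ≤ hsq m n P (k' + 1) := (seq_mono hP k').1
  have := nonstall_h hP (show csq m n P (k' + 1) + hsq m n P k' < m + n by omega)
  omega

lemma corner_inj (hP : IsRP m n P) {k1 k2 : ℕ} (h1 : 1 ≤ k1) (hlt : k1 < k2)
    (hv : csq m n P k1 + hsq m n P k1 = csq m n P k2 + hsq m n P k2)
    (hN : csq m n P k1 + hsq m n P k1 < m + n) : False := by
  have hcm : csq m n P k1 < m := by
    by_cases h : csq m n P k1 = m
    · have := csq_m_hsq hP h1 h
      omega
    · have := csq_le_m (P := P) k1; omega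
  have hprog := csq_prog hP h1 hcm
  have hh : hsq m n P k1 ≤ hsq m n P (k1 + 1) := (seq_mono hP k1).1
  have hc2 : csq m n P (k1 + 1) ≤ csq m n P k2 := csq_mono hP (by omega)
  have hh2 : hsq m n P (k1 + 1) ≤ hsq m n P k2 := hsq_mono hP (by omega)
  omega

lemma step_iff (hP : IsRP m n P) {i : ℕ} (hi : i + 1 < m + n) :
    pkS m n P i < pkS m n P (i + 1) ↔
      ∃ k, 1 ≤ k ∧ k ≤ m + n + 1 ∧ csq m n P k + hsq m n P k = i + 1 := by
  obtain ⟨hpu, k0, hEN0⟩ := master hP i (by omega)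
  obtain ⟨hpu', k1, hEN1⟩ := master hP (i + 1) hi
  constructor
  · intro hasc
    -- must be N phase at i and E phase at i+1
    rcases hEN0 with hE | hN
    · exfalso
      rcases hEN1 with hE' | hN'
      · rw [hE.2.2.1, hE'.2.2.1] at hasc; omega
      · rw [hE.2.2.1, hN'.2.2.1] at hasc; omega
    · obtain ⟨hlo0, hhi0, hpk0, -, -, -⟩ := hN
      rcases hEN1 with hE' | hN'
      · -- corner between N (k0) and E (k1)
        have hcorner : csq m n P (k0 + 1) + hsq m n P (k0 + 1) = i + 1 := by
          by_contra hne
          have hNph : NPh (m := m) (n := n) (P := P) (i + 1) :=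
            ⟨k0, by omega, by omega⟩
          have hEph : EPh (m := m) (n := n) (P := P) (i + 1) :=
            ⟨k1, hE'.1, hE'.2.1⟩
          exact phase_excl hP hEph hNph
        refine ⟨k0 + 1, by omega, ?_, hcorner⟩
        have := corner_lb hP k0 (by omega)
        omega
      · rw [hpk0, hN'.2.2.1] at hasc; omega
  · rintro ⟨k, hk1, hkle, hv⟩
    obtain ⟨k', rfl⟩ : ∃ k', k = k' + 1 := ⟨k - 1, by omega⟩
    have hhmono : hsq m n P k' ≤ hsq m n P (k' + 1) := (seq_mono hP k').1
    have hs_lt : hsq m n P k' < hsq m n P (k' + 1) :=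
      nonstall_h hP (by omega)
    have hcs_lt : csq m n P (k' + 1) < csq m n P (k' + 2) :=
      nonstall_c hP (by omega)
    have hNph : NPh (m := m) (n := n) (P := P) i := ⟨k', by omega, by omega⟩
    have hEph : EPh (m := m) (n := n) (P := P) (i + 1) := by
      refine ⟨k' + 1, by omega, ?_⟩
      rw [show k' + 1 + 1 = k' + 2 from rfl]
      omega
    have hp0 : pkS m n P i = 1 := by
      rcases hEN0 with hE | hN
      · exact absurd (phase_excl hP ⟨k0, hE.1, hE.2.1⟩ hNph) (by simp)
      · exact hN.2.2.1
    have hp1 : pkS m n P (i + 1) = 2 := by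
      rcases hEN1 with hE | hN
      · exact hE.2.2.1
      · exact absurd (phase_excl hP hEph ⟨k1, hN.1, hN.2.1⟩) (by simp)
    omega

lemma pmaj_eq_bounce (hP : IsRP m n P) :
    rpBounce m n P = ldPmaj (m + n) (wF m n P) (lF m n P) := by
  have hpmaj : ldPmaj (m + n) (wF m n P) (lF m n P) =
      ∑ i ∈ range (m + n - 1),
        if pkS m n P i < pkS m n P (i + 1) then m + n - 1 - i else 0 := rfl
  rw [bounce_sum hP, hpmaj]
  have hstep : ∀ i ∈ range (m + n - 1),
      (if pkS m n P i < pkS m n P (i + 1) then m + n - 1 - i else 0) =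
      (if ∃ k, 1 ≤ k ∧ k ≤ m + n + 1 ∧ csq m n P k + hsq m n P k = i + 1
        then m + n - 1 - i else 0) := by
    intro i hi
    rw [mem_range] at hi
    exact if_congr (step_iff hP (by omega)) rfl rfl
  rw [Finset.sum_congr rfl hstep, ← Finset.sum_filter]
  -- split the bounce sum into nonzero part
  rw [← Finset.sum_filter_add_sum_filter_not (Finset.Icc 1 (m + n + 1))
    (fun k => csq m n P k + hsq m n P k < m + n)]
  have hzero : ∑ k ∈ (Finset.Icc 1 (m + n + 1)).filter
      (fun k => ¬ csq m n P k + hsq m n P k < m + n),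
      ((m + n) - (csq m n P k + hsq m n P k)) = 0 := by
    apply Finset.sum_eq_zero
    intro k hk
    rw [mem_filter] at hk
    omega
  rw [hzero, add_zero]
  refine Finset.sum_bij (fun k _ => csq m n P k + hsq m n P k - 1) ?_ ?_ ?_ ?_
  · intro k hk
    rw [mem_filter, Finset.mem_Icc] at hk
    have hpos := corner_pos hP hk.1.1 hk.2
    rw [mem_filter, mem_range]
    refine ⟨by omega, k, hk.1.1, hk.1.2, by omega⟩
  · intro k1 hk1 k2 hk2 heq
    rw [mem_filter, Finset.mem_Icc] at hk1 hk2
    have hpos1 := corner_pos hP hk1.1.1 hk1.2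
    have hpos2 := corner_pos hP hk2.1.1 hk2.2
    by_contra hne
    rcases lt_or_gt_of_ne hne with h | h
    · exact corner_inj hP hk1.1.1 h (by omega) hk1.2
    · exact corner_inj hP hk2.1.1 h (by omega) hk2.2
  · intro i hi
    rw [mem_filter, mem_range] at hi
    obtain ⟨hilt, k, hk1, hkle, hv⟩ := hi
    refine ⟨k, ?_, ?_⟩
    · rw [mem_filter, Finset.mem_Icc]
      exact ⟨⟨hk1, hkle⟩, by omega⟩
    · omega
  · intro k hk
    rw [mem_filter, Finset.mem_Icc] at hk
    have hpos := corner_pos hP hk.1.1 hk.2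
    omega

end St16

/-- for a reduced polyomino `P ∈ RP(m,n)` with area word
`0 a_1 … a_(m+n)`, let `φ(P)` be the two car parking function whose area word is
`|a_1| … |a_(m+n)|`, with `i`-th label `1` if `a_i` is barred and `2` otherwise.
Then `bounce(P) = pmaj(φ(P))`. -/


theorem statement16 (m n : ℕ) (P : PolyBase m n) (hP : IsRP m n P) :
    rpBounce m n P =
      ldPmaj (m + n) (fun i => rpVal m n P (i + 1))
        (fun i => if rpRank m n P (i + 1) % 2 = 1 then 1 else 2) := by
  exact St16.pmaj_eq_bounce hP

end DeltaConj

end
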